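/- arXiv:2206.00333 — 7 statements merged into one kernel-verified Lean document; each statement's English description precedes it below -/
import Mathlib

section
/- Let σ : A* → B* be a return morphism for two distinct words w and w' with |w| ≤ |w'|. Then for every prefix u of w' with |u| ≥ |w|, the morphism σ is also a return morphism for u. -/
noncomputable def occCount {B : Type*} (u w : List B) : ℕ :=
  {i : ℕ | i ≤ w.length ∧ u <+: w.drop i}.ncard

/-- `σ` is a return morphism for the nonempty word `w`: it is injective (as a morphism on
words) and for every letter `a`, the word `σ(a)w` contains exactly two occurrences of `w`,
one as a proper prefix and one as a proper suffix. -/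
def IsReturnMorphism {A B : Type*} (σ : A → List B) (w : List B) : Prop :=
  w ≠ [] ∧ Function.Injective (fun v : List A => (v.map σ).flatten) ∧
    ∀ a : A, σ a ≠ [] ∧ w <+: σ a ++ w ∧ occCount w (σ a ++ w) = 2

/-- Two words that are each prefixes of `s`-shifted copies of themselves are both prefixes of
the infinite word `s^ω`; hence the shorter is a prefix of the longer. -/
lemma prefix_of_selfshift {B : Type*} (s : List B) (hs : s ≠ []) :
    ∀ n (x y : List B), y.length ≤ n → x <+: s ++ x → y <+: s ++ y →
      x.length ≤ y.length → x <+: y := by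
  intro n
  induction n with
  | zero =>
    intro x y hy _ _ hxy
    have : x = [] := List.eq_nil_of_length_eq_zero (Nat.le_antisymm (hxy.trans hy) (Nat.zero_le _))
    simp [this]
  | succ n ih =>
    intro x y hy hx hyp hxy
    have hslen : 0 < s.length := List.length_pos_iff.mpr hs
    by_cases hys : y.length ≤ s.length
    · have hys' : y <+: s :=
        List.prefix_of_prefix_length_le hyp (List.prefix_append s y) hys
      have hxs : x <+: s :=
        List.prefix_of_prefix_length_le hx (List.prefix_append s x) (hxy.trans hys)
      exact List.prefix_of_prefix_length_le hxs hys' hxy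
    · push_neg at hys
      have hsy : s <+: y :=
        List.prefix_of_prefix_length_le (List.prefix_append s y) hyp hys.le
      obtain ⟨y₁, rfl⟩ := hsy
      have hy₁ : y₁ <+: s ++ y₁ := (List.prefix_append_right_inj s).mp hyp
      have hy₁n : y₁.length ≤ n := by
        simp only [List.length_append] at hy; omega
      by_cases hxs : x.length ≤ s.length
      · exact (List.prefix_of_prefix_length_le hx (List.prefix_append s x) hxs).trans ⟨y₁, rfl⟩
      · push_neg at hxs
        have hsx : s <+: x :=
          List.prefix_of_prefix_length_le (List.prefix_append s x) hx hxs.le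
        obtain ⟨x₁, rfl⟩ := hsx
        have hx₁ : x₁ <+: s ++ x₁ := (List.prefix_append_right_inj s).mp hx
        have hx₁y₁ : x₁.length ≤ y₁.length := by
          simp only [List.length_append] at hxy; omega
        exact (List.prefix_append_right_inj s).mpr (ih x₁ y₁ hy₁n hx₁ hy₁ hx₁y₁)

/-- If `σ` is a return morphism for two distinct words `w` and `w'` with `|w| ≤ |w'|`,
then `σ` is a return morphism for every prefix `u` of `w'` of length at least `|w|`. -/
theorem stmt_1 {A B : Type*} (σ : A → List B) (w w' : List B)
    (hw : IsReturnMorphism σ w) (hw' : IsReturnMorphism σ w')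
    (hne : w ≠ w') (hlen : w.length ≤ w'.length) :
    ∀ u : List B, u <+: w' → w.length ≤ u.length → IsReturnMorphism σ u := by
  obtain ⟨hwne, hinj, hwa⟩ := hw
  obtain ⟨hw'ne, -, hw'a⟩ := hw'
  intro u hu hulen
  have hwpos : 0 < w.length := List.length_pos_iff.mpr hwne
  have hune : u ≠ [] := List.length_pos_iff.mp (lt_of_lt_of_le hwpos hulen)
  refine ⟨hune, hinj, fun a => ?_⟩
  obtain ⟨hane, hwp, hwocc⟩ := hwa a
  unfold occCount at hwocc
  obtain ⟨-, hw'p, -⟩ := hw'a a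
  have hapos : 0 < (σ a).length := List.length_pos_iff.mpr hane
  -- u is a prefix of σ a ++ u
  have hup : u <+: σ a ++ u :=
    List.prefix_of_prefix_length_le (hu.trans hw'p)
      ((List.prefix_append_right_inj (σ a)).mpr hu)
      (by simp)
  -- w is a prefix of u
  have hwu : w <+: u :=
    prefix_of_selfshift (σ a) hane u.length w u le_rfl hwp hup hulen
  refine ⟨hane, hup, ?_⟩
  -- the occurrence set for w in σ a ++ w is exactly {0, |σ a|}
  have hzero_ne : (0 : ℕ) ≠ (σ a).length := by omega
  have hSw : {i : ℕ | i ≤ (σ a ++ w).length ∧ w <+: (σ a ++ w).drop i}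
      = {0, (σ a).length} := by
    have hsub : ({0, (σ a).length} : Set ℕ) ⊆
        {i : ℕ | i ≤ (σ a ++ w).length ∧ w <+: (σ a ++ w).drop i} := by
      rintro i (rfl | rfl)
      · exact ⟨Nat.zero_le _, by simpa using hwp⟩
      · refine ⟨by simp, ?_⟩
        rw [List.drop_left]
    refine (Set.eq_of_subset_of_ncard_le hsub ?_ ?_).symm
    · rw [hwocc, Set.ncard_pair hzero_ne]
    · exact (Set.finite_Iic ((σ a ++ w).length)).subset (fun i hi => hi.1)
  -- the occurrence set for u in σ a ++ u is exactly {0, |σ a|}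
  have hfinu : {i : ℕ | i ≤ (σ a ++ u).length ∧ u <+: (σ a ++ u).drop i}.Finite :=
    (Set.finite_Iic ((σ a ++ u).length)).subset (fun i hi => hi.1)
  have hsubu : ({0, (σ a).length} : Set ℕ) ⊆
      {i : ℕ | i ≤ (σ a ++ u).length ∧ u <+: (σ a ++ u).drop i} := by
    rintro i (rfl | rfl)
    · exact ⟨Nat.zero_le _, by simpa using hup⟩
    · exact ⟨by simp, by rw [List.drop_left]⟩
  have hSu : {i : ℕ | i ≤ (σ a ++ u).length ∧ u <+: (σ a ++ u).drop i}
      = {0, (σ a).length} := by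
    apply Set.eq_of_subset_of_ncard_le
    · rintro i ⟨hile, hipre⟩
      -- i ≤ |σ a| since u is nonempty
      have hlenle : u.length ≤ ((σ a ++ u).drop i).length := hipre.length_le
      rw [List.length_drop, List.length_append] at hlenle
      have hia : i ≤ (σ a).length := by
        have := List.length_pos_iff.mpr hune; omega
      -- w occurs at position i in σ a ++ w
      have hdrop : (σ a ++ u).drop i = (σ a).drop i ++ u :=
        List.drop_append_of_le_length hia
      have hdropw : (σ a ++ w).drop i = (σ a).drop i ++ w :=
        List.drop_append_of_le_length hia
      have hwocc_i : w <+: (σ a ++ w).drop i := by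
        rw [hdropw]
        refine List.prefix_of_prefix_length_le (l₃ := (σ a).drop i ++ u)
          (hwu.trans (by rw [← hdrop]; exact hipre))
          ((List.prefix_append_right_inj _).mpr hwu) (by simp)
      have : i ∈ ({0, (σ a).length} : Set ℕ) := by
        rw [← hSw]
        refine ⟨?_, hwocc_i⟩
        simp only [List.length_append]; omega
      exact this
    · exact Set.ncard_le_ncard hsubu hfinu
    · exact Set.toFinite _
  rw [occCount, hSu, Set.ncard_pair hzero_ne]
end

section
/- Let σ : A* → B* be a return morphism for two distinct words w and w' with |w| ≤ |w'|, and let X be a shift space over A. Then w is not right special in the language of σ·X, i.e., there is exactly one letter b ∈ B with wb in the language of σ·X. -/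
def shiftMap {A : Type*} (x : ℤ → A) : ℤ → A := fun n => x (n + 1)

/-- `u` occurs as a factor of the bi-infinite word `x`. -/
def FactorOf {A : Type*} (u : List A) (x : ℤ → A) : Prop :=
  ∃ i : ℤ, ∀ k : Fin u.length, x (i + ((k : ℕ) : ℤ)) = u.get k

/-- The language of a set of bi-infinite words. -/
def lang {A : Type*} (X : Set (ℤ → A)) : Set (List A) := {u | ∃ x ∈ X, FactorOf u x}

/-- A (nonempty) shift space: a nonempty, closed, shift-invariant subset of `A^ℤ`. -/
def IsShiftSpace {A : Type*} [TopologicalSpace A] (X : Set (ℤ → A)) : Prop :=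
  X.Nonempty ∧ IsClosed X ∧ shiftMap '' X = X

/-- The language of the image shift `σ · X`: the factors of the images under `σ`
of the words of the language of `X`. -/
def imageLang {A B : Type*} (σ : A → List B) (X : Set (ℤ → A)) : Set (List B) :=
  {u | ∃ v ∈ lang X, u <:+: (v.map σ).flatten}

/-- If a word is a prefix of `p ++ q` and fits inside `p`, it is a prefix of `p`. -/
lemma aux_pref_of_pref_append {B : Type*} {u p q : List B} (h : u <+: p ++ q)
    (hl : u.length ≤ p.length) : u <+: p := by
  rcases List.prefix_or_prefix_of_prefix h (List.prefix_append p q) with h' | h'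
  · exact h'
  · rw [h'.eq_of_length_le hl]

/-- `w` is a prefix of `σ(v) ++ w` for every word `v`. -/
lemma aux_w_pref {A B : Type*} (σ : A → List B) {w : List B} (hw : IsReturnMorphism σ w) :
    ∀ v : List A, w <+: (v.map σ).flatten ++ w := by
  intro v
  induction v with
  | nil => simp
  | cons a v ih =>
    have h1 : w <+: σ a ++ w := (hw.2.2 a).2.1
    obtain ⟨t, ht⟩ := ih
    have hgoal : ((a :: v).map σ).flatten ++ w = σ a ++ ((v.map σ).flatten ++ w) := by
      simp
    rw [hgoal, ← ht]
    have : w <+: (σ a ++ w) ++ t := h1.trans (List.prefix_append _ _)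
    rwa [List.append_assoc] at this

/-- Since each `σ a` is nonempty, `|σ(v)| ≥ |v|`. -/
lemma aux_len {A B : Type*} (σ : A → List B) (hσ : ∀ a : A, σ a ≠ []) :
    ∀ v : List A, v.length ≤ ((v.map σ).flatten).length := by
  intro v
  induction v with
  | nil => simp
  | cons a v ih =>
    simp only [List.map_cons, List.flatten_cons, List.length_append, List.length_cons]
    have := List.length_pos_iff.mpr (hσ a)
    omega

/-- The occurrences of `w` in `σ(a) ++ w` are exactly at positions `0` and `|σ a|`. -/
lemma aux_occ_set {A B : Type*} (σ : A → List B) {w : List B} (hw : IsReturnMorphism σ w)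
    (a : A) :
    {i : ℕ | i ≤ (σ a ++ w).length ∧ w <+: (σ a ++ w).drop i} = {0, (σ a).length} := by
  obtain ⟨hwne, -, hp⟩ := hw
  obtain ⟨hane, hpre, hocc⟩ := hp a
  have hne0 : (0 : ℕ) ≠ (σ a).length := (List.length_pos_iff.mpr hane).ne
  have h0 : 0 ∈ {i : ℕ | i ≤ (σ a ++ w).length ∧ w <+: (σ a ++ w).drop i} :=
    ⟨Nat.zero_le _, by simpa using hpre⟩
  have hla : (σ a).length ∈ {i : ℕ | i ≤ (σ a ++ w).length ∧ w <+: (σ a ++ w).drop i} := by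
    refine ⟨by simp, ?_⟩
    rw [List.drop_left]
  have hfin : {i : ℕ | i ≤ (σ a ++ w).length ∧ w <+: (σ a ++ w).drop i}.Finite :=
    (Set.finite_Iic (σ a ++ w).length).subset (fun i hi => hi.1)
  have hsub : ({0, (σ a).length} : Set ℕ) ⊆
      {i : ℕ | i ≤ (σ a ++ w).length ∧ w <+: (σ a ++ w).drop i} := by
    intro i hi
    rcases hi with rfl | hi
    · exact h0
    · rw [Set.mem_singleton_iff] at hi; rw [hi]; exact hla
  have hcard : {i : ℕ | i ≤ (σ a ++ w).length ∧ w <+: (σ a ++ w).drop i}.ncard ≤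
      ({0, (σ a).length} : Set ℕ).ncard := by
    rw [Set.ncard_pair hne0]
    exact le_of_eq hocc
  exact (Set.eq_of_subset_of_ncard_le hsub hcard hfin).symm

/-- Every occurrence of `w` in `σ(v) ++ w` is at a cut point. -/
lemma aux_cut {A B : Type*} (σ : A → List B) {w : List B} (hw : IsReturnMorphism σ w) :
    ∀ (v : List A) (i : ℕ), i ≤ ((v.map σ).flatten).length →
      w <+: (((v.map σ).flatten) ++ w).drop i →
      ∃ v₁ v₂ : List A, v = v₁ ++ v₂ ∧ i = ((v₁.map σ).flatten).length := by
  intro v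
  induction v with
  | nil =>
    intro i hi _
    exact ⟨[], [], rfl, by simp at hi ⊢; omega⟩
  | cons a v ih =>
    intro i hi hpre
    have hflat : ((a :: v).map σ).flatten = σ a ++ (v.map σ).flatten := by simp
    by_cases hcase : (σ a).length ≤ i
    · have hi' : i - (σ a).length ≤ ((v.map σ).flatten).length := by
        rw [hflat, List.length_append] at hi; omega
      have hd : (((a :: v).map σ).flatten ++ w).drop i
          = ((v.map σ).flatten ++ w).drop (i - (σ a).length) := by
        rw [hflat, List.append_assoc, List.drop_append,
          List.drop_eq_nil_of_le hcase, List.nil_append]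
      rw [hd] at hpre
      obtain ⟨v₁, v₂, rfl, hlen1⟩ := ih (i - (σ a).length) hi' hpre
      refine ⟨a :: v₁, v₂, rfl, ?_⟩
      simp only [List.map_cons, List.flatten_cons, List.length_append]
      omega
    · push_neg at hcase
      obtain ⟨t, ht⟩ := aux_w_pref σ hw v
      have hsplit : ((a :: v).map σ).flatten ++ w = (σ a ++ w) ++ t := by
        rw [hflat, List.append_assoc, ← ht, ← List.append_assoc]
      rw [hsplit] at hpre
      have hle : i ≤ (σ a ++ w).length := by
        simp only [List.length_append]; omega
      have hdrop : ((σ a ++ w) ++ t).drop i = (σ a ++ w).drop i ++ t := by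
        rw [List.drop_append, Nat.sub_eq_zero_of_le hle, List.drop_zero]
      rw [hdrop] at hpre
      have hwlen : w.length ≤ ((σ a ++ w).drop i).length := by
        rw [List.length_drop, List.length_append]; omega
      have hpre2 : w <+: (σ a ++ w).drop i := aux_pref_of_pref_append hpre hwlen
      have hmem : i ∈ ({0, (σ a).length} : Set ℕ) := by
        rw [← aux_occ_set σ hw a]; exact ⟨hle, hpre2⟩
      simp only [Set.mem_insert_iff, Set.mem_singleton_iff] at hmem
      rcases hmem with rfl | hmem
      · exact ⟨[], a :: v, rfl, by simp⟩
      · omega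

/-- If `σ` is a return morphism for two distinct words `w, w'` with `|w| ≤ |w'|` and `X`
is a shift space over `A`, then `w` is not right special in the language of `σ · X`:
there is exactly one letter `b` with `wb` in the language of `σ · X`. -/
theorem stmt_3 {A B : Type*} [TopologicalSpace A] [DiscreteTopology A]
    (σ : A → List B) (w w' : List B)
    (hw : IsReturnMorphism σ w) (hw' : IsReturnMorphism σ w')
    (hne : w ≠ w') (hlen : w.length ≤ w'.length)
    (X : Set (ℤ → A)) (hX : IsShiftSpace X) (hover : ∀ a : A, [a] ∈ lang X) :
    ∃! b : B, w ++ [b] ∈ imageLang σ X := by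
  obtain ⟨x, hxX⟩ := hX.1
  have hσne : ∀ a : A, σ a ≠ [] := fun a => (hw.2.2 a).1
  -- `w` is a (strict) prefix of `w'`
  have hww' : w <+: w' := by
    set v := List.replicate w'.length (x 0) with hv
    have hlenv : w'.length ≤ ((v.map σ).flatten).length := by
      have := aux_len σ hσne v
      simpa [hv] using this
    have h1 : w <+: (v.map σ).flatten :=
      aux_pref_of_pref_append (aux_w_pref σ hw v) (le_trans hlen hlenv)
    have h2 : w' <+: (v.map σ).flatten :=
      aux_pref_of_pref_append (aux_w_pref σ hw' v) hlenv
    rcases List.prefix_or_prefix_of_prefix h1 h2 with h | h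
    · exact h
    · rw [h.eq_of_length_le hlen]
  have hlt : w.length < w'.length := by
    rcases lt_or_eq_of_le hlen with h | h
    · exact h
    · exact absurd (hww'.eq_of_length_le h.ge) hne
  obtain ⟨r, hr⟩ := hww'
  have hrne : r ≠ [] := by
    intro h; apply hne; rw [← hr, h, List.append_nil]
  obtain ⟨b0, r', rfl⟩ := List.exists_cons_of_ne_nil hrne
  have hwb0 : w ++ [b0] <+: w' := by
    rw [← hr]; exact ⟨r', by simp⟩
  -- words of the language of `X`
  have hvlang : ∀ n : ℕ, (List.ofFn (fun k : Fin n => x (k : ℕ))) ∈ lang X := by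
    intro n
    refine ⟨x, hxX, 0, fun k => ?_⟩
    rw [List.get_ofFn]
    simp
  -- existence
  have hmain : w ++ [b0] ∈ imageLang σ X := by
    set v := List.ofFn (fun k : Fin w'.length => x (k : ℕ)) with hv
    refine ⟨v, hvlang _, ?_⟩
    have hlv : w'.length ≤ ((v.map σ).flatten).length := by
      have := aux_len σ hσne v
      simpa [hv] using this
    have h2 : w' <+: (v.map σ).flatten :=
      aux_pref_of_pref_append (aux_w_pref σ hw' v) hlv
    exact (hwb0.trans h2).isInfix
  refine ⟨b0, hmain, ?_⟩
  -- uniqueness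
  intro b hb
  obtain ⟨v, hvX, s, t, hst⟩ := hb
  have hi_le : s.length ≤ ((v.map σ).flatten).length := by
    rw [← hst]; simp only [List.length_append]; omega
  have hdrop : (((v.map σ).flatten) ++ w).drop s.length = (w ++ [b]) ++ t ++ w := by
    rw [← hst,
      show (s ++ (w ++ [b]) ++ t) ++ w = s ++ ((w ++ [b]) ++ t ++ w) by
        simp [List.append_assoc]]
    exact List.drop_left
  have hpref : w <+: (((v.map σ).flatten) ++ w).drop s.length := by
    rw [hdrop]
    exact ((List.prefix_append w [b]).trans (List.prefix_append _ t)).trans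
      (List.prefix_append _ w)
  obtain ⟨v₁, v₂, rfl, hlen1⟩ := aux_cut σ hw v s.length hi_le hpref
  have hst' : s ++ ((w ++ [b]) ++ t) = (v₁.map σ).flatten ++ (v₂.map σ).flatten := by
    rw [show (v₁.map σ).flatten ++ (v₂.map σ).flatten = (((v₁ ++ v₂)).map σ).flatten by simp,
      ← hst]
    simp [List.append_assoc]
  obtain ⟨hs, htail⟩ := List.append_inj hst' hlen1
  have hwb : w ++ [b] <+: (v₂.map σ).flatten := ⟨t, htail⟩
  have hwb' : w ++ [b] <+: (v₂.map σ).flatten ++ w' := hwb.trans (List.prefix_append _ _)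
  have h2 : w' <+: (v₂.map σ).flatten ++ w' := aux_w_pref σ hw' v₂
  have hfin : w ++ [b] <+: w' := by
    rcases List.prefix_or_prefix_of_prefix hwb' h2 with h | h
    · exact h
    · have hlb : (w ++ [b]).length ≤ w'.length := by
        simp only [List.length_append, List.length_cons, List.length_nil]
        omega
      rw [h.eq_of_length_le hlb]
  have h1 : w ++ [b] = w ++ [b0] := by
    have e1 := List.prefix_iff_eq_take.mp hfin
    have e2 := List.prefix_iff_eq_take.mp hwb0
    rw [e1, e2]
    simp
  simpa using List.append_cancel_left h1
end

section
/- Let X be a shift space over A such that every bispecial factor w of X satisfies Card(E(w)) − Card(E^L(w)) − Card(E^R(w)) + 1 = 0. Then p_X(n) = (p_X(1) − 1)·n + 1 for every n ≥ 0. -/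
/-- The factor complexity of `X`: the number of factors of length `n`. -/
noncomputable def complexity {A : Type*} (X : Set (ℤ → A)) (n : ℕ) : ℕ :=
  {u ∈ lang X | u.length = n}.ncard


section Aux
variable {A : Type*} {X : Set (ℤ → A)}

lemma lang_nil (hne : X.Nonempty) : ([] : List A) ∈ lang X := by
  obtain ⟨x, hx⟩ := hne
  exact ⟨x, hx, 0, fun k => absurd k.isLt (by simp)⟩

lemma lang_of_cons {a : A} {u : List A} (h : a :: u ∈ lang X) : u ∈ lang X := by
  obtain ⟨x, hx, i, hi⟩ := h
  refine ⟨x, hx, i + 1, fun k => ?_⟩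
  have := hi ⟨k + 1, by simpa using Nat.succ_lt_succ k.isLt⟩
  simp only [List.get_eq_getElem] at this ⊢
  rw [show i + 1 + ((k : ℕ) : ℤ) = i + (((k : ℕ) + 1 : ℕ) : ℤ) by push_cast; ring]
  simpa using this

lemma lang_of_concat {b : A} {u : List A} (h : u ++ [b] ∈ lang X) : u ∈ lang X := by
  obtain ⟨x, hx, i, hi⟩ := h
  refine ⟨x, hx, i, fun k => ?_⟩
  have := hi ⟨k, by simp⟩
  simp only [List.get_eq_getElem] at this ⊢
  rw [this, List.getElem_append_left k.isLt]

lemma lang_exists_cons {u : List A} (h : u ∈ lang X) : ∃ a, a :: u ∈ lang X := by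
  obtain ⟨x, hx, i, hi⟩ := h
  refine ⟨x (i - 1), x, hx, i - 1, fun k => ?_⟩
  rcases k with ⟨kv, hk⟩
  cases kv with
  | zero => simp
  | succ j =>
    have hj : j < u.length := by simpa using hk
    have := hi ⟨j, hj⟩
    simp only [List.get_eq_getElem] at this ⊢
    rw [show i - 1 + ((j + 1 : ℕ) : ℤ) = i + (j : ℤ) by push_cast; ring]
    simpa using this

lemma lang_exists_concat {u : List A} (h : u ∈ lang X) : ∃ b, u ++ [b] ∈ lang X := by
  obtain ⟨x, hx, i, hi⟩ := h
  refine ⟨x (i + u.length), x, hx, i, fun k => ?_⟩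
  rcases k with ⟨kv, hk⟩
  simp only [List.length_append, List.length_singleton] at hk
  rcases Nat.lt_succ_iff_lt_or_eq.mp hk with h' | h'
  · have := hi ⟨kv, h'⟩
    simp only [List.get_eq_getElem] at this ⊢
    rw [List.getElem_append_left h']
    exact this
  · subst h'
    simp only [List.get_eq_getElem, List.getElem_concat_length]

lemma lang_tail (hne : X.Nonempty) {u : List A} (h : u ∈ lang X) : u.tail ∈ lang X := by
  cases u with
  | nil => exact lang_nil hne
  | cons a u => exact lang_of_cons h

lemma lang_dropLast (hne : X.Nonempty) {u : List A} (h : u ∈ lang X) : u.dropLast ∈ lang X := by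
  rcases List.eq_nil_or_concat u with rfl | ⟨L, b, rfl⟩
  · exact lang_nil hne
  · rw [List.concat_eq_append] at h ⊢
    rw [List.dropLast_concat]; exact lang_of_concat h

noncomputable def LF {A : Type*} [Fintype A] (X : Set (ℤ → A)) (n : ℕ) : Finset (List A) :=
  ((List.finite_length_eq A n).subset
    (fun u (hu : u ∈ lang X ∧ u.length = n) => hu.2)).toFinset

noncomputable def CF {A : Type*} [Fintype A] (X : Set (ℤ → A)) (w : List A) : Finset A :=
  (Set.toFinite {a | a :: w ∈ lang X}).toFinset
noncomputable def RF {A : Type*} [Fintype A] (X : Set (ℤ → A)) (w : List A) : Finset A :=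
  (Set.toFinite {b | w ++ [b] ∈ lang X}).toFinset
noncomputable def EF {A : Type*} [Fintype A] (X : Set (ℤ → A)) (w : List A) : Finset (A × A) :=
  (Set.toFinite {p : A × A | p.1 :: (w ++ [p.2]) ∈ lang X}).toFinset

variable [Fintype A]

@[simp] lemma mem_LF {u : List A} {n : ℕ} : u ∈ LF X n ↔ u ∈ lang X ∧ u.length = n := by
  rw [LF]; exact Set.Finite.mem_toFinset _

@[simp] lemma mem_CF {w : List A} {a : A} : a ∈ CF X w ↔ a :: w ∈ lang X := by
  simp [CF, Set.Finite.mem_toFinset]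

@[simp] lemma mem_RF {w : List A} {b : A} : b ∈ RF X w ↔ w ++ [b] ∈ lang X := by
  simp [RF, Set.Finite.mem_toFinset]

@[simp] lemma mem_EF {w : List A} {p : A × A} : p ∈ EF X w ↔ p.1 :: (w ++ [p.2]) ∈ lang X := by
  simp [EF, Set.Finite.mem_toFinset]


lemma lang_nonempty {u : List A} (h : u ∈ lang X) : X.Nonempty := ⟨h.choose, h.choose_spec.1⟩

lemma card_LF_right (n : ℕ) : (LF X (n+1)).card = ∑ w ∈ LF X n, (RF X w).card := by
  classical
  rw [Finset.card_eq_sum_card_fiberwise (f := fun v : List A => v.dropLast) (t := LF X n)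
    (fun v hv => by
      obtain ⟨hv1, hv2⟩ := mem_LF.mp hv
      exact mem_LF.mpr ⟨lang_dropLast (lang_nonempty hv1) hv1, by simp [hv2]⟩)]
  refine Finset.sum_congr rfl (fun w hw => ?_)
  obtain ⟨hw1, hw2⟩ := mem_LF.mp hw
  refine (Finset.card_bij (fun b _ => w ++ [b]) ?_ ?_ ?_).symm
  · intro b hb
    simp only [Finset.mem_filter, mem_LF]
    exact ⟨⟨mem_RF.mp hb, by simp [hw2]⟩, by simp⟩
  · intro b1 _ b2 _ h; simpa using h
  · intro v hv
    simp only [Finset.mem_filter, mem_LF] at hv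
    have hne : v ≠ [] := by intro h; rw [h] at hv; simp at hv
    refine ⟨v.getLast hne, mem_RF.mpr ?_, ?_⟩
    · rw [← hv.2, List.dropLast_append_getLast hne]; exact hv.1.1
    · show w ++ [v.getLast hne] = v
      conv_rhs => rw [← List.dropLast_append_getLast hne]
      rw [hv.2]

lemma card_LF_left (n : ℕ) : (LF X (n+1)).card = ∑ w ∈ LF X n, (CF X w).card := by
  classical
  rw [Finset.card_eq_sum_card_fiberwise (f := fun v : List A => v.tail) (t := LF X n)
    (fun v hv => by
      obtain ⟨hv1, hv2⟩ := mem_LF.mp hv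
      exact mem_LF.mpr ⟨lang_tail (lang_nonempty hv1) hv1, by simp [hv2]⟩)]
  refine Finset.sum_congr rfl (fun w hw => ?_)
  obtain ⟨hw1, hw2⟩ := mem_LF.mp hw
  refine (Finset.card_bij (fun a _ => a :: w) ?_ ?_ ?_).symm
  · intro a ha
    simp only [Finset.mem_filter, mem_LF]
    exact ⟨⟨mem_CF.mp ha, by simp [hw2]⟩, by simp⟩
  · intro a1 _ a2 _ h; simpa using h
  · intro v hv
    simp only [Finset.mem_filter, mem_LF] at hv
    have hne : v ≠ [] := by intro h; rw [h] at hv; simp at hv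
    refine ⟨v.head hne, mem_CF.mpr ?_, ?_⟩
    · rw [← hv.2, List.cons_head_tail hne]; exact hv.1.1
    · show v.head hne :: w = v
      conv_rhs => rw [← List.cons_head_tail hne]
      rw [hv.2]

lemma card_LF_ext (n : ℕ) : (LF X (n+2)).card = ∑ w ∈ LF X n, (EF X w).card := by
  classical
  rw [Finset.card_eq_sum_card_fiberwise (f := fun v : List A => v.tail.dropLast) (t := LF X n)
    (fun v hv => by
      obtain ⟨hv1, hv2⟩ := mem_LF.mp hv
      have h1 := lang_tail (lang_nonempty hv1) hv1
      exact mem_LF.mpr ⟨lang_dropLast (lang_nonempty hv1) h1, by simp [hv2]⟩)]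
  refine Finset.sum_congr rfl (fun w hw => ?_)
  obtain ⟨hw1, hw2⟩ := mem_LF.mp hw
  refine (Finset.card_bij (fun p _ => p.1 :: (w ++ [p.2])) ?_ ?_ ?_).symm
  · intro p hp
    simp only [Finset.mem_filter, mem_LF]
    refine ⟨⟨mem_EF.mp hp, by simp [hw2]⟩, by simp⟩
  · intro p1 _ p2 _ h
    simp only [List.cons.injEq, List.append_cancel_left_eq, List.cons.injEq] at h
    exact Prod.ext h.1 h.2.1
  · intro v hv
    simp only [Finset.mem_filter, mem_LF] at hv
    have hne : v ≠ [] := by intro h; rw [h] at hv; simp at hv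
    have hne2 : v.tail ≠ [] := by
      intro h
      have := hv.1.2
      rw [← List.cons_head_tail hne, h] at this
      simp at this
    refine ⟨(v.head hne, v.tail.getLast hne2), mem_EF.mpr ?_, ?_⟩
    · show v.head hne :: (w ++ [v.tail.getLast hne2]) ∈ lang X
      rw [← hv.2, List.dropLast_append_getLast hne2, List.cons_head_tail hne]
      exact hv.1.1
    · show v.head hne :: (w ++ [v.tail.getLast hne2]) = v
      conv_rhs => rw [← List.cons_head_tail hne, ← List.dropLast_append_getLast hne2]
      rw [hv.2]

lemma ncard_CF (w : List A) : {a | a :: w ∈ lang X}.ncard = (CF X w).card :=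
  Set.ncard_eq_toFinset_card _ (Set.toFinite _)
lemma ncard_RF (w : List A) : {b | w ++ [b] ∈ lang X}.ncard = (RF X w).card :=
  Set.ncard_eq_toFinset_card _ (Set.toFinite _)
lemma ncard_EF (w : List A) : {p : A × A | p.1 :: (w ++ [p.2]) ∈ lang X}.ncard = (EF X w).card :=
  Set.ncard_eq_toFinset_card _ (Set.toFinite _)

lemma complexity_eq (n : ℕ) : complexity X n = (LF X n).card :=
  Set.ncard_eq_toFinset_card _
    ((List.finite_length_eq A n).subset (fun u (hu : u ∈ lang X ∧ u.length = n) => hu.2))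

lemma CF_nonempty {w : List A} (hw : w ∈ lang X) : 1 ≤ (CF X w).card := by
  obtain ⟨a, ha⟩ := lang_exists_cons hw
  exact Finset.card_pos.mpr ⟨a, mem_CF.mpr ha⟩

lemma RF_nonempty {w : List A} (hw : w ∈ lang X) : 1 ≤ (RF X w).card := by
  obtain ⟨b, hb⟩ := lang_exists_concat hw
  exact Finset.card_pos.mpr ⟨b, mem_RF.mpr hb⟩

lemma key_lemma
    (hbisp : ∀ w ∈ lang X,
      2 ≤ ({a : A | a :: w ∈ lang X}).ncard →
      2 ≤ ({b : A | w ++ [b] ∈ lang X}).ncard →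
      ({p : A × A | p.1 :: (w ++ [p.2]) ∈ lang X}).ncard + 1 =
        ({a : A | a :: w ∈ lang X}).ncard + ({b : A | w ++ [b] ∈ lang X}).ncard)
    {w : List A} (hw : w ∈ lang X) :
    (EF X w).card + 1 = (CF X w).card + (RF X w).card := by
  classical
  have hC1 := CF_nonempty hw
  have hR1 := RF_nonempty hw
  by_cases h2 : 2 ≤ (CF X w).card ∧ 2 ≤ (RF X w).card
  · have := hbisp w hw (by rw [ncard_CF]; exact h2.1) (by rw [ncard_RF]; exact h2.2)
    rwa [ncard_CF, ncard_RF, ncard_EF] at this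
  · rcases not_and_or.mp h2 with h | h
    · obtain ⟨a0, ha0⟩ := Finset.card_eq_one.mp (le_antisymm (by omega) hC1)
      have hEF : EF X w = (RF X w).image (fun b => (a0, b)) := by
        ext ⟨a, b⟩
        simp only [mem_EF, Finset.mem_image, mem_RF, Prod.mk.injEq]
        constructor
        · intro hab
          have h1 : (a :: w) ++ [b] ∈ lang X := by simpa using hab
          have h2 : a ∈ CF X w := mem_CF.mpr (lang_of_concat h1)
          have h3 : a = a0 := by rw [ha0] at h2; simpa using h2
          exact ⟨b, lang_of_cons hab, h3.symm, rfl⟩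
        · rintro ⟨b', hb', rfl, rfl⟩
          obtain ⟨a', ha'⟩ := lang_exists_cons hb'
          have h2 : a' ∈ CF X w := mem_CF.mpr (lang_of_concat (by simpa using ha'))
          have h3 : a' = a0 := by rw [ha0] at h2; simpa using h2
          rw [← h3]; exact ha'
      have : (EF X w).card = (RF X w).card := by
        rw [hEF]; exact Finset.card_image_of_injective _ (fun b1 b2 h => by simpa using h)
      rw [this, ha0]; simp [add_comm]
    · obtain ⟨b0, hb0⟩ := Finset.card_eq_one.mp (le_antisymm (by omega) hR1)
      have hEF : EF X w = (CF X w).image (fun a => (a, b0)) := by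
        ext ⟨a, b⟩
        simp only [mem_EF, Finset.mem_image, mem_CF, Prod.mk.injEq]
        constructor
        · intro hab
          have h1 : (a :: w) ++ [b] ∈ lang X := by simpa using hab
          have h2 : b ∈ RF X w := mem_RF.mpr (lang_of_cons hab)
          have h3 : b = b0 := by rw [hb0] at h2; simpa using h2
          exact ⟨a, lang_of_concat h1, rfl, h3.symm⟩
        · rintro ⟨a', ha', rfl, rfl⟩
          obtain ⟨b', hb'⟩ := lang_exists_concat ha'
          have h2 : b' ∈ RF X w := mem_RF.mpr (lang_of_cons (by simpa using hb'))
          have h3 : b' = b0 := by rw [hb0] at h2; simpa using h2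
          rw [← h3]; simpa using hb'
      have : (EF X w).card = (CF X w).card := by
        rw [hEF]; exact Finset.card_image_of_injective _ (fun a1 a2 h => by simpa using h)
      rw [this, hb0]; simp

lemma card_LF_zero (hne : X.Nonempty) : (LF X 0).card = 1 := by
  have h : LF X 0 = {[]} := by
    ext u
    simp only [mem_LF, List.length_eq_zero_iff, Finset.mem_singleton]
    constructor
    · exact fun h => h.2
    · rintro rfl; exact ⟨lang_nil hne, rfl⟩
  rw [h]; rfl


end Aux

/-- If every bispecial factor `w` of the shift space `X` satisfies
`Card(E(w)) − Card(E^L(w)) − Card(E^R(w)) + 1 = 0`, then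
`p_X(n) = (p_X(1) − 1)·n + 1` for every `n`. -/
theorem stmt_7 {A : Type*} [Fintype A] [TopologicalSpace A] [DiscreteTopology A]
    (X : Set (ℤ → A)) (hX : IsShiftSpace X)
    (hbisp : ∀ w ∈ lang X,
      2 ≤ ({a : A | a :: w ∈ lang X}).ncard →
      2 ≤ ({b : A | w ++ [b] ∈ lang X}).ncard →
      ({p : A × A | p.1 :: (w ++ [p.2]) ∈ lang X}).ncard + 1 =
        ({a : A | a :: w ∈ lang X}).ncard + ({b : A | w ++ [b] ∈ lang X}).ncard) :
    ∀ n : ℕ, complexity X n = (complexity X 1 - 1) * n + 1 := by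
  classical
  have hne := hX.1
  have p0 : (LF X 0).card = 1 := card_LF_zero hne
  have mono : ∀ m : ℕ, (LF X m).card ≤ (LF X (m+1)).card := by
    intro m
    rw [card_LF_right]
    calc (LF X m).card = ∑ _w ∈ LF X m, 1 := by simp
      _ ≤ ∑ w ∈ LF X m, (RF X w).card :=
        Finset.sum_le_sum (fun w hw => RF_nonempty (mem_LF.mp hw).1)
  have hrec : ∀ m : ℕ, (LF X (m+2)).card + (LF X m).card = 2 * (LF X (m+1)).card := by
    intro m
    have e1 : (LF X m).card = ∑ _w ∈ LF X m, 1 := by simp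
    rw [card_LF_ext m, e1, ← Finset.sum_add_distrib]
    rw [Finset.sum_congr rfl (fun w hw => key_lemma hbisp (mem_LF.mp hw).1)]
    rw [Finset.sum_add_distrib, ← card_LF_left m, ← card_LF_right m]
    ring
  set d := (LF X 1).card - 1 with hd
  have h1 : (LF X 1).card = d + 1 := by
    have := mono 0
    norm_num at this
    omega
  have main : ∀ m : ℕ, (LF X m).card = d * m + 1 ∧ (LF X (m+1)).card = d * (m+1) + 1 := by
    intro m
    induction m with
    | zero => exact ⟨p0, by rw [h1]; ring⟩
    | succ k ih =>
      refine ⟨ih.2, ?_⟩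
      have hr := hrec k
      rw [show k + 2 = k + 1 + 1 from by omega] at hr
      have e1 : d * (k+1) = d*k + d := by ring
      have e2 : d * (k+1+1) = d*k + 2*d := by ring
      omega
  intro n
  rw [complexity_eq, complexity_eq, h1, (main n).1]
  simp
end

section
/- Let G = G({C_1, …, C_k}) be a multi-clique graph on vertex set V that is acyclic for the coloring and connected. Suppose D ∪ E = C_1 and Card(D ∩ E) = 1. Then G' = G({D, E, C_2, …, C_k}) is connected, acyclic for the coloring, and a subgraph of G. -/
/-- In the edge-colored multigraph determined by the cliques `{v | M ℓ v}` (one clique of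
color `ℓ` for each label `ℓ`), there is an edge of color `ℓ` between `x` and `y`. -/
def MEdge {Λ V : Type*} (M : Λ → V → Prop) (ℓ : Λ) (x y : V) : Prop :=
  x ≠ y ∧ M ℓ x ∧ M ℓ y

/-- A simple cycle of length `n + 2` in the colored multigraph determined by `M`:
pairwise distinct vertices `v i`, consecutive vertices joined by an edge of color `ℓ i`,
and the (undirected, colored) edges pairwise distinct. -/
def IsCycleM {Λ V : Type*} (M : Λ → V → Prop) (n : ℕ) (v : Fin (n + 2) → V)
    (ℓ : Fin (n + 2) → Λ) : Prop :=
  Function.Injective v ∧ (∀ i, MEdge M (ℓ i) (v i) (v (i + 1))) ∧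
    ∀ i j, i ≠ j → ¬(ℓ i = ℓ j ∧ ({v i, v (i + 1)} : Set V) = {v j, v (j + 1)})

/-- The colored multigraph determined by `M` is acyclic for the coloring: every simple
cycle only uses edges of a single color. -/
def AcyclicForColoring {Λ V : Type*} (M : Λ → V → Prop) : Prop :=
  ∀ n v ℓ, IsCycleM M n v ℓ → ∀ i j, ℓ i = ℓ j

/-- The colored multigraph determined by `M` is connected (on the whole vertex set `V`). -/
def MConnected {Λ V : Type*} (M : Λ → V → Prop) : Prop :=
  ∀ x y : V, Relation.ReflTransGen (fun p q => ∃ ℓ, MEdge M ℓ p q) x y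

/-- The membership predicate of the colored multi-clique `G({D, E, C_2, …, C_k})`
obtained from `G({C_1, …, C_k})` (indexed by `Fin (k+1)`, with `C 0 = C_1`) by
replacing the clique `C 0` by the two cliques `D` and `E` (with fresh distinct colors). -/
def Msplit {V : Type*} (k : ℕ) (C : Fin (k + 1) → Set V) (D E : Set V) :
    Bool ⊕ {i : Fin (k + 1) // i ≠ 0} → V → Prop
  | Sum.inl true, x => x ∈ D
  | Sum.inl false, x => x ∈ E
  | Sum.inr i, x => x ∈ C i.1

open scoped Fin.NatCast Fin.CommRing

lemma walk10 {n : ℕ} (b : Fin (n + 2) → Bool) (i0 : Fin (n + 2))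
    (h : ∀ j, j ≠ i0 → b j = b (j + 1)) :
    ∀ m : ℕ, m ≤ n + 1 → b (i0 + 1 + (m : Fin (n + 2))) = b (i0 + 1) := by
  intro m
  induction m with
  | zero => intro _; simp
  | succ m ih =>
    intro hm
    have hm' : m ≤ n + 1 := Nat.le_of_succ_le hm
    have hmn : m ≤ n := Nat.lt_succ_iff.mp hm
    have hcast : ((m + 1 : ℕ) : Fin (n + 2)) = (m : ℕ) + 1 := by push_cast; ring
    rw [hcast, ← add_assoc]
    have hne : i0 + 1 + (m : ℕ) ≠ i0 := by
      intro hcon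
      have h2 : ((1 + m : ℕ) : Fin (n + 2)) = 0 := by
        have : (1 : Fin (n+2)) + (m : ℕ) = 0 := by
          have h3 : i0 + (1 + (m : Fin (n+2))) = i0 + 0 := by rw [add_assoc] at hcon; simpa using hcon
          exact add_left_cancel h3
        push_cast
        linear_combination this
      have hv : ((1 + m : ℕ) : Fin (n + 2)).val = 1 + m := Fin.val_cast_of_lt (by omega)
      rw [h2] at hv
      simp at hv
      omega
    rw [← h _ hne, ih hm']

lemma twoChanges10 {n : ℕ} (b : Fin (n + 2) → Bool) (i j : Fin (n + 2)) (hb : b i ≠ b j) :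
    ∃ p q, p ≠ q ∧ b p ≠ b (p + 1) ∧ b q ≠ b (q + 1) := by
  have h1 : ∃ p, b p ≠ b (p + 1) := by
    by_contra hno
    push_neg at hno
    have hw := walk10 b (i - 1) (fun j _ => hno j) (j - i).val
      (Nat.lt_succ_iff.mp (j - i).isLt)
    rw [Fin.cast_val_eq_self] at hw
    have : i - 1 + 1 + (j - i) = j := by ring
    rw [this, sub_add_cancel] at hw
    exact hb hw.symm
  obtain ⟨p, hp⟩ := h1
  by_contra hno
  push_neg at hno
  have hq : ∀ q, q ≠ p → b q = b (q + 1) := by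
    intro q hqp
    exact hno p q (Ne.symm hqp) hp
  have hw := walk10 b p hq (n + 1) (le_refl _)
  have hcalc : p + 1 + ((n + 1 : ℕ) : Fin (n + 2)) = p := by
    have h0 : ((n + 2 : ℕ) : Fin (n + 2)) = 0 := by
      simp [Fin.natCast_self]
    push_cast at h0 ⊢
    linear_combination h0
  rw [hcalc] at hw
  exact hp hw

def phi10 {k : ℕ} : Bool ⊕ {i : Fin (k + 1) // i ≠ 0} → Fin (k + 1)
  | Sum.inl _ => 0
  | Sum.inr i => i.1


/-- If the multi-clique `G({C_1, …, C_k})` is acyclic for the coloring and connected,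
and `D ∪ E = C_1` with `Card(D ∩ E) = 1`, then `G({D, E, C_2, …, C_k})` is connected,
acyclic for the coloring, and a subgraph of `G({C_1, …, C_k})`. -/
theorem stmt_10 {V : Type*} [Fintype V] (k : ℕ) (C : Fin (k + 1) → Set V)
    (D E : Set V) (hDE : D ∪ E = C 0) (hone : (D ∩ E).ncard = 1)
    (hacyc : AcyclicForColoring (fun (i : Fin (k + 1)) (x : V) => x ∈ C i))
    (hconn : MConnected (fun (i : Fin (k + 1)) (x : V) => x ∈ C i)) :
    MConnected (Msplit k C D E) ∧ AcyclicForColoring (Msplit k C D E) ∧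
      (∀ x y : V, (∃ ℓ, MEdge (Msplit k C D E) ℓ x y) →
        ∃ i : Fin (k + 1), MEdge (fun i (x : V) => x ∈ C i) i x y) := by
  obtain ⟨w, hw⟩ := Set.ncard_eq_one.mp hone
  have hwDE : w ∈ D ∩ E := by rw [hw]; exact Set.mem_singleton w
  have hsub : ∀ (c : Bool ⊕ {i : Fin (k + 1) // i ≠ 0}) (x : V),
      Msplit k C D E c x → x ∈ C (phi10 c) := by
    rintro (b | i) x hx
    · cases b
      · show x ∈ C 0
        rw [← hDE]; exact Or.inr hx
      · show x ∈ C 0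
        rw [← hDE]; exact Or.inl hx
    · exact hx
  refine ⟨?_, ?_, ?_⟩
  · -- connectivity
    have stepD : ∀ x y : V, x ∈ D → y ∈ D →
        Relation.ReflTransGen (fun p q => ∃ ℓ, MEdge (Msplit k C D E) ℓ p q) x y := by
      intro x y hx hy
      by_cases hxy : x = y
      · subst hxy; exact Relation.ReflTransGen.refl
      · exact Relation.ReflTransGen.single ⟨Sum.inl true, hxy, hx, hy⟩
    have stepE : ∀ x y : V, x ∈ E → y ∈ E →
        Relation.ReflTransGen (fun p q => ∃ ℓ, MEdge (Msplit k C D E) ℓ p q) x y := by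
      intro x y hx hy
      by_cases hxy : x = y
      · subst hxy; exact Relation.ReflTransGen.refl
      · exact Relation.ReflTransGen.single ⟨Sum.inl false, hxy, hx, hy⟩
    have lift : ∀ x y : V, (∃ i : Fin (k + 1), MEdge (fun i (x : V) => x ∈ C i) i x y) →
        Relation.ReflTransGen (fun p q => ∃ ℓ, MEdge (Msplit k C D E) ℓ p q) x y := by
      rintro x y ⟨i, hxy, hx, hy⟩
      by_cases hi : i = 0
      · subst hi
        rw [← hDE] at hx hy
        rcases hx with hx | hx <;> rcases hy with hy | hy
        · exact stepD x y hx hy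
        · exact (stepD x w hx hwDE.1).trans (stepE w y hwDE.2 hy)
        · exact (stepE x w hx hwDE.2).trans (stepD w y hwDE.1 hy)
        · exact stepE x y hx hy
      · exact Relation.ReflTransGen.single ⟨Sum.inr ⟨i, hi⟩, hxy, hx, hy⟩
    intro x y
    induction hconn x y with
    | refl => exact Relation.ReflTransGen.refl
    | tail _ e ih => exact ih.trans (lift _ _ e)
  · -- acyclicity
    intro n v ℓ hcyc
    obtain ⟨hinj, hedge, hdist⟩ := hcyc
    by_contra hcon
    push_neg at hcon
    obtain ⟨i, j, hij⟩ := hcon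
    by_cases hall : ∀ p, ∃ bb, ℓ p = Sum.inl bb
    · -- all edges are D/E edges: two color changes give two vertices in D ∩ E
      choose b hb using hall
      have hbne : b i ≠ b j := fun h => hij (by rw [hb i, hb j, h])
      obtain ⟨p, q, hpq, hp, hq⟩ := twoChanges10 b i j hbne
      have hmem : ∀ r, b r ≠ b (r + 1) → v (r + 1) ∈ D ∩ E := by
        intro r hr
        have h1 := (hedge r).2.2
        have h2 := (hedge (r + 1)).2.1
        rw [hb r] at h1
        rw [hb (r + 1)] at h2
        rcases Bool.eq_false_or_eq_true (b r) with hbr | hbr <;>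
          rcases Bool.eq_false_or_eq_true (b (r + 1)) with hbr1 | hbr1 <;>
          rw [hbr] at h1 hr <;> rw [hbr1] at h2 hr
        · exact absurd rfl hr
        · exact ⟨h1, h2⟩
        · exact ⟨h2, h1⟩
        · exact absurd rfl hr
      have hvp : v (p + 1) = w := by
        have := hmem p hp; rw [hw] at this; exact this
      have hvq : v (q + 1) = w := by
        have := hmem q hq; rw [hw] at this; exact this
      exact hpq (add_right_cancel (hinj (hvp.trans hvq.symm)))
    · -- some edge has an original color i ≠ 0
      push_neg at hall
      obtain ⟨p0, hp0⟩ := hall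
      obtain ⟨c, hc⟩ : ∃ c, ℓ p0 = Sum.inr c := by
        cases hℓ : ℓ p0 with
        | inl bb => exact absurd hℓ (hp0 bb)
        | inr c => exact ⟨c, rfl⟩
      have hnotconst : ∃ a b2, phi10 (ℓ a) ≠ phi10 (ℓ b2) := by
        by_contra hcc
        push_neg at hcc
        have hall' : ∀ r, ℓ r = Sum.inr c := by
          intro r
          have h1 := hcc r p0
          rw [hc] at h1
          cases hr : ℓ r with
          | inl bb =>
            rw [hr] at h1
            exact absurd h1.symm c.2
          | inr d =>
            rw [hr] at h1
            exact congrArg Sum.inr (Subtype.ext h1)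
        exact hij (by rw [hall' i, hall' j])
      obtain ⟨a, b2, hab⟩ := hnotconst
      have hcyc' : IsCycleM (fun (i : Fin (k + 1)) (x : V) => x ∈ C i) n v
          (fun r => phi10 (ℓ r)) := by
        refine ⟨hinj, fun r => ⟨(hedge r).1, hsub _ _ (hedge r).2.1, hsub _ _ (hedge r).2.2⟩, ?_⟩
        rintro p q hpq ⟨hleq, hset⟩
        have h1 : v p = v q ∨ v p = v (q + 1) := by
          have : v p ∈ ({v q, v (q + 1)} : Set V) := hset ▸ Set.mem_insert _ _
          simpa using this
        have h2 : v q = v p ∨ v q = v (p + 1) := by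
          have : v q ∈ ({v p, v (p + 1)} : Set V) := hset.symm ▸ Set.mem_insert _ _
          simpa using this
        rcases h1 with h1 | h1
        · exact hpq (hinj h1)
        rcases h2 with h2 | h2
        · exact hpq (hinj h2).symm
        have hp1 : p = q + 1 := hinj h1
        have hq1 : q = p + 1 := hinj h2
        have hpp : p + 0 = p + 2 := by
          rw [add_zero]
          calc p = q + 1 := hp1
            _ = p + 1 + 1 := by rw [← hq1]
            _ = p + 2 := by ring
        have h20 : (0 : Fin (n + 2)) = 2 := add_left_cancel hpp
        have hn : n = 0 := by
          by_contra hn0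
          have hlt : 2 < n + 2 := by omega
          have hv2 : ((2 : ℕ) : Fin (n + 2)).val = 2 := Fin.val_cast_of_lt hlt
          have h2' : ((2 : ℕ) : Fin (n + 2)) = 0 := by exact_mod_cast h20.symm
          rw [h2'] at hv2
          simp at hv2
        subst hn
        have hfin2 : ∀ p q r s : Fin (0 + 2), p ≠ q → r ≠ s →
            (r = p ∧ s = q) ∨ (r = q ∧ s = p) := by decide
        rcases eq_or_ne a b2 with hab2 | hab2
        · exact hab (by rw [hab2])
        rcases hfin2 p q a b2 hpq hab2 with ⟨h3, h4⟩ | ⟨h3, h4⟩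
        · exact hab (by rw [h3, h4]; exact hleq)
        · exact hab (by rw [h3, h4]; exact hleq.symm)
      exact hab (hacyc n v _ hcyc' a b2)
  · -- subgraph
    rintro x y ⟨c, hxy, hx, hy⟩
    exact ⟨phi10 c, hxy, hsub c x hx, hsub c y hy⟩
end

section
/- Let X be a shift space and N ≥ 0. The extension graph E_X(v) is acyclic for all v ∈ L(X) of length < N if and only if, for all n ≤ N, the graph G^L_n(X) is acyclic for the labeling (every simple cycle in G^L_n(X) uses edges with a single label). -/
/-- The extension graph of the word `v` with respect to the factorial language `L`:
the bipartite graph on the left extensions and the right extensions of `v`, with an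
edge between `a` (left) and `b` (right) whenever `a v b ∈ L`. -/
def extGraph {A : Type*} (L : Set (List A)) (v : List A) :
    SimpleGraph ({a : A // a :: v ∈ L} ⊕ {b : A // v ++ [b] ∈ L}) :=
  SimpleGraph.fromRel (fun p q =>
    match p, q with
    | Sum.inl a, Sum.inr b => (a.1 :: (v ++ [b.1])) ∈ L
    | _, _ => False)

/-- Membership predicate describing the colored multigraph `G^L_n(X)`: the label `w`
contributes the clique `E^L_X(w)` on the vertex set `A`, for each `w` of length `n`
in the language of `X`. -/
def GLmem {A : Type*} (X : Set (ℤ → A)) (n : ℕ) (w : List A) (a : A) : Prop :=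
  w.length = n ∧ w ∈ lang X ∧ (a :: w) ∈ lang X

/- ======================= auxiliary lemmas ======================= -/

theorem lang_prefix {A : Type*} {X : Set (ℤ → A)} {u w : List A}
    (h : u ++ w ∈ lang X) : u ∈ lang X := by
  obtain ⟨x, hx, i, hi⟩ := h
  refine ⟨x, hx, i, fun k => ?_⟩
  have hk : (k : ℕ) < (u ++ w).length := by
    simp only [List.length_append]; omega
  have := hi ⟨k, hk⟩
  simpa [List.get_eq_getElem, List.getElem_append_left (k.2)] using this

theorem lang_suffix {A : Type*} {X : Set (ℤ → A)} {u w : List A}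
    (h : u ++ w ∈ lang X) : w ∈ lang X := by
  obtain ⟨x, hx, i, hi⟩ := h
  refine ⟨x, hx, i + u.length, fun k => ?_⟩
  have hk : u.length + (k : ℕ) < (u ++ w).length := by
    simp only [List.length_append]; omega
  have := hi ⟨u.length + k, hk⟩
  simp only [List.get_eq_getElem] at this ⊢
  rw [List.getElem_append_right (by omega)] at this
  · simpa [add_assoc] using this

theorem fin_succ_val {n : ℕ} (i : Fin (n + 2)) :
    (i + 1).val = if i.val = n + 1 then 0 else i.val + 1 := by
  have h1 : (i + 1).val = (i.val + 1) % (n + 2) := by simp [Fin.add_def]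
  rcases Nat.lt_or_ge (i.val + 1) (n + 2) with h | h
  · rw [h1, Nat.mod_eq_of_lt h]
    have : i.val ≠ n + 1 := by omega
    simp [this]
  · have h2 : i.val = n + 1 := by have := i.2; omega
    rw [h1, h2]; simp

theorem fin_two_step_ne {K : ℕ} (hK : 1 ≤ K) (j : Fin (K + 2)) : j + 1 + 1 ≠ j := by
  intro h
  have h2 := congrArg Fin.val h
  rw [fin_succ_val, fin_succ_val] at h2
  have hj := j.2
  split at h2
  · split at h2 <;> omega
  · split at h2 <;> omega

theorem pairs_ne {V : Type*} {K : ℕ} (hK : 1 ≤ K) {g : Fin (K + 2) → V}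
    (hg : Function.Injective g) {i j : Fin (K + 2)} (hij : i ≠ j) :
    ({g i, g (i + 1)} : Set V) ≠ {g j, g (j + 1)} := by
  intro h
  rcases Set.pair_eq_pair_iff.mp h with ⟨h1, h2⟩ | ⟨h1, h2⟩
  · exact hij (hg h1)
  · exact fin_two_step_ne hK j (by rw [← hg h1, hg h2])

def wrap {n : ℕ} (s : ℕ) : Fin (n + 2) := ⟨s % (n + 2), Nat.mod_lt s (by omega)⟩

theorem wrap_val {n : ℕ} (s : ℕ) : (wrap s : Fin (n + 2)).val = s % (n + 2) := rfl

theorem wrap_small {n : ℕ} {s : ℕ} (h : s < n + 2) : (wrap s : Fin (n + 2)).val = s := by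
  rw [wrap_val, Nat.mod_eq_of_lt h]

theorem wrap_eq {n : ℕ} (i : Fin (n + 2)) : wrap i.val = i := Fin.ext (wrap_small i.2)

theorem wrap_zero {n : ℕ} : (wrap 0 : Fin (n + 2)) = 0 := by
  apply Fin.ext
  rw [wrap_small (by omega)]
  simp

theorem wrap_one {n : ℕ} : (wrap 1 : Fin (n + 2)) = 1 := by
  apply Fin.ext
  rw [wrap_small (by omega)]
  simp

theorem wrap_top {n : ℕ} : (wrap (n + 2) : Fin (n + 2)) = wrap 0 := by
  apply Fin.ext
  rw [wrap_val, wrap_val]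
  simp

theorem wrap_add {n : ℕ} (a b : ℕ) :
    (wrap a : Fin (n + 2)) + wrap b = wrap (a + b) := by
  apply Fin.ext
  rw [Fin.add_def, wrap_val, wrap_val, wrap_val]
  simp [Nat.add_mod]

theorem wrap_succ {n : ℕ} (s : ℕ) : (wrap s : Fin (n + 2)) + 1 = wrap (s + 1) := by
  apply Fin.ext
  rw [fin_succ_val, wrap_val, wrap_val]
  have hmod : (s + 1) % (n + 2) = (s % (n + 2) + 1) % (n + 2) := by
    conv_lhs => rw [Nat.add_mod]
    rw [Nat.mod_eq_of_lt (show 1 < n + 2 by omega)]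
  have hs2 : s % (n + 2) < n + 2 := Nat.mod_lt s (by omega)
  rcases Nat.lt_or_ge (s % (n + 2)) (n + 1) with hlt | hge
  · rw [if_neg (by omega), hmod]
    exact (Nat.mod_eq_of_lt (by omega)).symm
  · have heq : s % (n + 2) = n + 1 := by omega
    rw [if_pos heq, hmod, heq]
    simp

theorem wrap_inj {n : ℕ} {a b : ℕ} (ha : a < n + 2) (hb : b < n + 2)
    (h : (wrap a : Fin (n + 2)) = wrap b) : a = b := by
  have := congrArg Fin.val h
  rwa [wrap_small ha, wrap_small hb] at this

theorem cycleM_natEdge {Λ V : Type*} {M : Λ → V → Prop} {n : ℕ} {v : Fin (n + 2) → V}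
    {ℓ : Fin (n + 2) → Λ} (h : IsCycleM M n v ℓ) (s : ℕ) :
    MEdge M (ℓ (wrap s)) (v (wrap s)) (v (wrap (s + 1))) := by
  have := h.2.1 (wrap s)
  rwa [wrap_succ] at this

theorem cycleM_rotate {Λ V : Type*} {M : Λ → V → Prop} {n : ℕ} {v : Fin (n + 2) → V}
    {ℓ : Fin (n + 2) → Λ} (h : IsCycleM M n v ℓ) (t : Fin (n + 2)) :
    IsCycleM M n (fun i => v (i + t)) (fun i => ℓ (i + t)) := by
  obtain ⟨hinj, hedge, hdist⟩ := h
  refine ⟨fun a b hab => by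
    have := hinj hab; exact add_right_cancel this, fun i => ?_, fun i j hij => ?_⟩
  · have := hedge (i + t)
    rwa [show i + t + 1 = i + 1 + t by exact add_right_comm i t 1] at this
  · have := hdist (i + t) (j + t) (fun hc => hij (add_right_cancel hc))
    rwa [show i + t + 1 = i + 1 + t by exact add_right_comm i t 1, show j + t + 1 = j + 1 + t by exact add_right_comm j t 1] at this

theorem isCycleM_of_nat {Λ V : Type*} {M : Λ → V → Prop} {K : ℕ} (hK : 1 ≤ K)
    (f : ℕ → V) (g : ℕ → Λ)
    (hinj : ∀ a b, a < K + 2 → b < K + 2 → f a = f b → a = b)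
    (hedge : ∀ s, s < K + 1 → MEdge M (g s) (f s) (f (s + 1)))
    (hlast : MEdge M (g (K + 1)) (f (K + 1)) (f 0)) :
    IsCycleM M K (fun i => f i.val) (fun i => g i.val) := by
  have hvinj : Function.Injective (fun i : Fin (K + 2) => f i.val) := by
    intro a b hab
    exact Fin.ext (hinj _ _ a.2 b.2 hab)
  refine ⟨hvinj, fun i => ?_, fun i j hij hc => pairs_ne hK hvinj hij hc.2⟩
  rcases Nat.lt_or_ge i.val (K + 1) with hlt | hge
  · have hs : (i + 1).val = i.val + 1 := by rw [fin_succ_val, if_neg (by omega)]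
    simpa only [hs] using hedge i.val hlt
  · have hival : i.val = K + 1 := by have := i.2; omega
    have hs : (i + 1).val = 0 := by rw [fin_succ_val, if_pos hival]
    simpa only [hs, hival] using hlast

theorem isCycleM_of_nat' {Λ V : Type*} {M : Λ → V → Prop} {K : ℕ}
    (f : ℕ → V) (g : ℕ → Λ)
    (hinj : ∀ a b, a < K + 2 → b < K + 2 → f a = f b → a = b)
    (hginj : ∀ a b, a < K + 2 → b < K + 2 → g a = g b → a = b)
    (hedge : ∀ s, s < K + 1 → MEdge M (g s) (f s) (f (s + 1)))
    (hlast : MEdge M (g (K + 1)) (f (K + 1)) (f 0)) :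
    IsCycleM M K (fun i => f i.val) (fun i => g i.val) := by
  have hvinj : Function.Injective (fun i : Fin (K + 2) => f i.val) := by
    intro a b hab
    exact Fin.ext (hinj _ _ a.2 b.2 hab)
  refine ⟨hvinj, fun i => ?_, fun i j hij hc => ?_⟩
  · rcases Nat.lt_or_ge i.val (K + 1) with hlt | hge
    · have hs : (i + 1).val = i.val + 1 := by rw [fin_succ_val, if_neg (by omega)]
      simpa only [hs] using hedge i.val hlt
    · have hival : i.val = K + 1 := by have := i.2; omega
      have hs : (i + 1).val = 0 := by rw [fin_succ_val, if_pos hival]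
      simpa only [hs, hival] using hlast
  · exact hij (Fin.ext (hginj _ _ i.2 j.2 hc.1))
theorem collapse_core {Λ V : Type*} {M : Λ → V → Prop} {K : ℕ}
    {v : Fin (K + 1 + 2) → V} {ℓ : Fin (K + 1 + 2) → Λ}
    (hcyc : IsCycleM M (K + 1) v ℓ)
    (hcd : ℓ (wrap 0) = ℓ (wrap 1))
    (IH : ∀ n', n' < K + 1 → ∀ (v' : Fin (n' + 2) → V) (ℓ' : Fin (n' + 2) → Λ),
      IsCycleM M n' v' ℓ' → ∀ i j, ℓ' i = ℓ' j) :
    ∀ i j, ℓ i = ℓ j := by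
  have hE := cycleM_natEdge hcyc
  have hvw : ∀ a b : ℕ, a < K + 1 + 2 → b < K + 1 + 2 → v (wrap a) = v (wrap b) → a = b :=
    fun a b ha hb h => wrap_inj ha hb (hcyc.1 h)
  suffices hcov : ∀ t : Fin (K + 1 + 2), ℓ t = ℓ (wrap 0) by
    intro i j; rw [hcov i, hcov j]
  by_cases hK : 1 ≤ K
  · -- remove vertex 1
    have hcycle := isCycleM_of_nat (M := M) hK
      (fun s => v (wrap (if s = 0 then 0 else s + 1)))
      (fun s => ℓ (wrap (if s = 0 then 0 else s + 1)))
      ?_ ?_ ?_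
    · have hall := IH K (by omega) _ _ hcycle
      intro t
      have ht := t.2
      rcases Nat.lt_or_ge t.val 2 with h2 | h2
      · rcases Nat.lt_or_ge t.val 1 with h1 | h1
        · have : t = wrap 0 := by rw [← wrap_eq t, show t.val = 0 by omega]
          rw [this]
        · have : t = wrap 1 := by rw [← wrap_eq t, show t.val = 1 by omega]
          rw [this, ← hcd]
      · have h := hall ⟨t.val - 1, by omega⟩ ⟨0, by omega⟩
        change ℓ (wrap (if t.val - 1 = 0 then 0 else t.val - 1 + 1)) =
          ℓ (wrap (if (0 : ℕ) = 0 then 0 else 0 + 1)) at h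
        rw [if_neg (by omega : ¬ t.val - 1 = 0), if_pos rfl,
          show t.val - 1 + 1 = t.val by omega, wrap_eq t] at h
        exact h
    · -- injectivity
      intro a b ha hb h
      have := hvw _ _ (by split <;> omega) (by split <;> omega) h
      split at this <;> split at this <;> omega
    · -- edges
      intro s hs
      rcases Nat.eq_zero_or_pos s with h0 | h0
      · subst h0
        simp only [if_pos rfl, if_neg (by omega : ¬ (0 + 1 : ℕ) = 0)]
        have E0 := hE 0
        have E1 := hE 1
        refine ⟨fun h => by have := hvw 0 (0 + 1 + 1) (by omega) (by omega) h; omega,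
          E0.2.1, ?_⟩
        have h := E1.2.2
        rw [← hcd] at h
        exact h
      · simp only [if_neg (by omega : ¬ s = 0), if_neg (by omega : ¬ s + 1 = 0)]
        exact hE (s + 1)
    · -- last edge
      simp only [if_neg (by omega : ¬ (K + 1 : ℕ) = 0), if_pos rfl]
      have h := hE (K + 2)
      rwa [show (K + 2) + 1 = K + 1 + 2 by omega, wrap_top] at h
  · -- K = 0 : triangle
    have hK0 : K = 0 := by omega
    subst hK0
    by_cases h02 : ℓ (wrap 2) = ℓ (wrap 0)
    · intro t
      have ht := t.2
      rcases Nat.lt_or_ge t.val 1 with h1 | h1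
      · rw [← wrap_eq t, show t.val = 0 by omega]
      · rcases Nat.lt_or_ge t.val 2 with h2 | h2
        · rw [← wrap_eq t, show t.val = 1 by omega, ← hcd]
        · rw [← wrap_eq t, show t.val = 2 by omega, h02]
    · exfalso
      have hcycle := isCycleM_of_nat' (M := M) (K := 0)
        (fun s => v (wrap (2 * s)))
        (fun s => if s = 0 then ℓ (wrap 0) else ℓ (wrap 2))
        ?_ ?_ ?_ ?_
      · have hall := IH 0 (by omega) _ _ hcycle
        have h := hall 1 0
        simp only [Fin.val_one, Fin.val_zero, if_neg one_ne_zero, if_pos rfl] at h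
        exact h02 h
      · intro a b ha hb h
        have := hvw _ _ (by omega) (by omega) h
        omega
      · intro a b ha hb h
        have ha' : a = 0 ∨ a = 1 := by omega
        have hb' : b = 0 ∨ b = 1 := by omega
        rcases ha' with rfl | rfl <;> rcases hb' with rfl | rfl
        · rfl
        · simp only [if_pos rfl, if_neg one_ne_zero] at h
          exact absurd h.symm h02
        · simp only [if_pos rfl, if_neg one_ne_zero] at h
          exact absurd h h02
        · rfl
      · intro s hs
        have hs0 : s = 0 := by omega
        subst hs0
        simp only [if_pos rfl]
        have E0 := hE 0
        have E1 := hE 1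
        refine ⟨fun h => by have := hvw (2 * 0) (2 * (0 + 1)) (by omega) (by omega) h; omega,
          ?_, ?_⟩
        · exact E0.2.1
        · have h := E1.2.2
          rw [← hcd] at h
          exact h
      · simp only [if_neg (by omega : ¬ (0 + 1 : ℕ) = 0)]
        have h := hE 2
        rw [show (2 : ℕ) + 1 = 0 + 1 + 2 by omega, wrap_top] at h
        refine ⟨fun hh => by have := hvw (2 * (0 + 1)) (2 * 0) (by omega) (by omega) hh; omega,
          h.2.1, h.2.2⟩

theorem split_core {Λ V : Type*} {M : Λ → V → Prop} {K : ℕ}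
    {v : Fin (K + 1 + 2) → V} {ℓ : Fin (K + 1 + 2) → Λ}
    (hcyc : IsCycleM M (K + 1) v ℓ) (d : ℕ) (hd2 : 2 ≤ d) (hdK : d ≤ K + 1)
    (hcd : ℓ (wrap 0) = ℓ (wrap d))
    (IH : ∀ n', n' < K + 1 → ∀ (v' : Fin (n' + 2) → V) (ℓ' : Fin (n' + 2) → Λ),
      IsCycleM M n' v' ℓ' → ∀ i j, ℓ' i = ℓ' j) :
    ∀ i j, ℓ i = ℓ j := by
  have hE := cycleM_natEdge hcyc
  have hvw : ∀ a b : ℕ, a < K + 1 + 2 → b < K + 1 + 2 → v (wrap a) = v (wrap b) → a = b :=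
    fun a b ha hb h => wrap_inj ha hb (hcyc.1 h)
  suffices hcov : ∀ t : Fin (K + 1 + 2), ℓ t = ℓ (wrap 0) by
    intro i j; rw [hcov i, hcov j]
  -- first short cycle C1 : 0, 1, ..., d-1, d, back to 0
  have hcyc1 : IsCycleM M (d - 1)
      (fun i => v (wrap i.val)) (fun i => if i.val = d then ℓ (wrap 0) else ℓ (wrap i.val)) := by
    have hb := isCycleM_of_nat (M := M) (K := d - 1) (by omega)
      (fun s => v (wrap s)) (fun s => if s = d then ℓ (wrap 0) else ℓ (wrap s))
      ?_ ?_ ?_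
    · exact hb
    · intro a b ha hb h
      exact hvw a b (by omega) (by omega) h
    · intro s hs
      show MEdge M (if s = d then ℓ (wrap 0) else ℓ (wrap s)) (v (wrap s)) (v (wrap (s + 1)))
      rw [if_neg (by omega : ¬ s = d)]
      exact hE s
    · show MEdge M (if d - 1 + 1 = d then ℓ (wrap 0) else ℓ (wrap (d - 1 + 1)))
        (v (wrap (d - 1 + 1))) (v (wrap 0))
      rw [show d - 1 + 1 = d by omega, if_pos rfl]
      refine ⟨fun h => by have := hvw d 0 (by omega) (by omega) h; omega, ?_, (hE 0).2.1⟩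
      have h := (hE d).2.1
      rwa [← hcd] at h
  have hall1 := IH (d - 1) (by omega) _ _ hcyc1
  have CA : ∀ s : ℕ, s < d → ℓ (wrap s) = ℓ (wrap 0) := by
    intro s hs
    have h := hall1 ⟨s, by omega⟩ ⟨d, by omega⟩
    change (if s = d then ℓ (wrap 0) else ℓ (wrap s)) =
      (if d = d then ℓ (wrap 0) else ℓ (wrap d)) at h
    rwa [if_neg (by omega : ¬ s = d), if_pos rfl] at h
  -- second short cycle C2 : d, d+1, ..., K+2, 0, back to d
  have hcyc2 : IsCycleM M (K + 2 - d)
      (fun i => v (wrap (d + i.val))) (fun i => ℓ (wrap (d + i.val))) := by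
    have hb := isCycleM_of_nat (M := M) (K := K + 2 - d) (by omega)
      (fun s => v (wrap (d + s))) (fun s => ℓ (wrap (d + s)))
      ?_ ?_ ?_
    · exact hb
    · intro a b ha hb h
      have hma : d + a ≤ K + 1 + 2 := by omega
      have hmb : d + b ≤ K + 1 + 2 := by omega
      have h2 := congrArg Fin.val (hcyc.1 h)
      rw [wrap_val, wrap_val] at h2
      rcases Nat.lt_or_ge (d + a) (K + 1 + 2) with h3 | h3 <;>
        rcases Nat.lt_or_ge (d + b) (K + 1 + 2) with h4 | h4
      · rw [Nat.mod_eq_of_lt h3, Nat.mod_eq_of_lt h4] at h2; omega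
      · have hb4 : d + b = K + 1 + 2 := by omega
        rw [Nat.mod_eq_of_lt h3, hb4, Nat.mod_self] at h2; omega
      · have ha3 : d + a = K + 1 + 2 := by omega
        rw [Nat.mod_eq_of_lt h4, ha3, Nat.mod_self] at h2; omega
      · omega
    · intro s hs
      show MEdge M (ℓ (wrap (d + s))) (v (wrap (d + s))) (v (wrap (d + (s + 1))))
      rw [show d + (s + 1) = d + s + 1 by omega]
      exact hE (d + s)
    · show MEdge M (ℓ (wrap (d + (K + 2 - d + 1)))) (v (wrap (d + (K + 2 - d + 1))))
        (v (wrap (d + 0)))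
      rw [show d + (K + 2 - d + 1) = K + 1 + 2 by omega, wrap_top, show d + 0 = d by omega]
      refine ⟨fun h => by have := hvw 0 d (by omega) (by omega) h; omega, (hE 0).2.1, ?_⟩
      have h := (hE d).2.1
      rwa [← hcd] at h
  have hall2 := IH (K + 2 - d) (by omega) _ _ hcyc2
  have CB : ∀ s : ℕ, d ≤ s → s < K + 1 + 2 → ℓ (wrap s) = ℓ (wrap 0) := by
    intro s hsd hs
    have h := hall2 ⟨s - d, by omega⟩ ⟨0, by omega⟩
    change ℓ (wrap (d + (s - d))) = ℓ (wrap (d + 0)) at h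
    rw [show d + (s - d) = s by omega, show d + 0 = d by omega] at h
    rw [h, ← hcd]
  intro t
  rcases Nat.lt_or_ge t.val d with h | h
  · rw [← wrap_eq t]; exact CA t.val h
  · rw [← wrap_eq t]; exact CB t.val h t.2
theorem extGraph_adj_inl_inr {A : Type*} {L : Set (List A)} {v : List A}
    {a : {a : A // a :: v ∈ L}} {b : {b : A // v ++ [b] ∈ L}} :
    (extGraph L v).Adj (Sum.inl a) (Sum.inr b) ↔ (a.1 :: (v ++ [b.1])) ∈ L := by
  simp only [extGraph, SimpleGraph.fromRel_adj]
  constructor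
  · rintro ⟨-, h | h⟩
    · exact h
    · exact h.elim
  · intro h
    exact ⟨by simp, Or.inl h⟩

theorem extGraph_not_adj_inl {A : Type*} {L : Set (List A)} {v : List A}
    {a b : {a : A // a :: v ∈ L}} : ¬ (extGraph L v).Adj (Sum.inl a) (Sum.inl b) := by
  simp only [extGraph, SimpleGraph.fromRel_adj]
  rintro ⟨-, h | h⟩ <;> exact h

theorem extGraph_not_adj_inr {A : Type*} {L : Set (List A)} {v : List A}
    {a b : {b : A // v ++ [b] ∈ L}} : ¬ (extGraph L v).Adj (Sum.inr a) (Sum.inr b) := by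
  simp only [extGraph, SimpleGraph.fromRel_adj]
  rintro ⟨-, h | h⟩ <;> exact h
open SimpleGraph in
theorem not_acyclic_of_alt_cycle {W : Type*} {G : SimpleGraph W} {K : ℕ}
    (x y : Fin (K + 2) → W) (hx : Function.Injective x) (hy : Function.Injective y)
    (hxy : ∀ i j, x i ≠ y j)
    (h1 : ∀ i, G.Adj (x i) (y i)) (h2 : ∀ i, G.Adj (y i) (x (i + 1))) :
    ¬ G.IsAcyclic := by
  intro hac
  set x' : ℕ → W := fun s => x ⟨s % (K + 2), Nat.mod_lt s (by omega)⟩ with hx'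
  set y' : ℕ → W := fun s => y ⟨s % (K + 2), Nat.mod_lt s (by omega)⟩ with hy'
  have hx'inj : ∀ a b, a < K + 2 → b < K + 2 → x' a = x' b → a = b := by
    intro a b ha hb h
    have := hx h
    have := congrArg Fin.val this
    simpa [Nat.mod_eq_of_lt ha, Nat.mod_eq_of_lt hb] using this
  have hy'inj : ∀ a b, a < K + 2 → b < K + 2 → y' a = y' b → a = b := by
    intro a b ha hb h
    have := hy h
    have := congrArg Fin.val this
    simpa [Nat.mod_eq_of_lt ha, Nat.mod_eq_of_lt hb] using this
  have hxy' : ∀ a b, x' a ≠ y' b := fun a b => hxy _ _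
  have h1' : ∀ s : ℕ, G.Adj (x' s) (y' s) := fun s => h1 _
  have h2' : ∀ s : ℕ, G.Adj (y' s) (x' (s + 1)) := by
    intro s
    have h := h2 ⟨s % (K + 2), Nat.mod_lt s (by omega)⟩
    have he : x (⟨s % (K + 2), Nat.mod_lt s (by omega)⟩ + 1) = x' (s + 1) := by
      apply congrArg
      apply Fin.ext
      rw [fin_succ_val]
      show (if s % (K + 2) = K + 1 then 0 else s % (K + 2) + 1) = (s + 1) % (K + 2)
      have hmod : (s + 1) % (K + 2) = (s % (K + 2) + 1) % (K + 2) := by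
        conv_lhs => rw [Nat.add_mod]
        rw [Nat.mod_eq_of_lt (show 1 < K + 2 by omega)]
      rcases Nat.lt_or_ge (s % (K + 2)) (K + 1) with hlt | hge
      · rw [if_neg (by omega), hmod]
        exact (Nat.mod_eq_of_lt (by omega)).symm
      · have hs2 : s % (K + 2) < K + 2 := Nat.mod_lt s (by omega)
        have heq : s % (K + 2) = K + 1 := by omega
        rw [if_pos heq, hmod, heq]
        simp
    rwa [he] at h
  have key : ∀ t : ℕ, t < K + 2 → ∃ p : G.Walk (x' (K + 1 - t)) (y' (K + 1)),
      p.length = 2 * t + 1 ∧ p.support.Nodup ∧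
      ∀ w ∈ p.support, ∃ s, s ≤ K + 1 ∧ K + 1 - t ≤ s ∧ (w = x' s ∨ w = y' s) := by
    intro t
    induction t with
    | zero =>
      intro _
      refine ⟨Walk.cons (h1' (K + 1)) Walk.nil, by simp, ?_, ?_⟩
      · simp only [Walk.support_cons, Walk.support_nil, List.nodup_cons, List.mem_cons,
          List.mem_singleton, List.not_mem_nil, or_false, List.nodup_singleton, and_true]
        exact ⟨hxy' _ _, not_false, List.nodup_nil⟩
      · intro w hw
        simp only [Walk.support_cons, Walk.support_nil, List.mem_cons, List.mem_singleton,
          List.not_mem_nil, or_false] at hw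
        rcases hw with h | h
        · exact ⟨K + 1, le_rfl, by omega, Or.inl h⟩
        · exact ⟨K + 1, le_rfl, by omega, Or.inr h⟩
    | succ t IH =>
      intro ht
      obtain ⟨p, hlen, hnd, hmem⟩ := IH (by omega)
      have hstep : K + 1 - (t + 1) + 1 = K + 1 - t := by omega
      have hadj2 : G.Adj (y' (K + 1 - (t + 1))) (x' (K + 1 - t)) := by
        have h := h2' (K + 1 - (t + 1))
        rwa [hstep] at h
      refine ⟨Walk.cons (h1' (K + 1 - (t + 1))) (Walk.cons hadj2 p), ?_, ?_, ?_⟩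
      · simp [hlen]; omega
      · simp only [Walk.support_cons, List.nodup_cons, List.mem_cons]
        refine ⟨?_, ?_, hnd⟩
        · push_neg
          refine ⟨hxy' _ _, fun hw => ?_⟩
          obtain ⟨s, hs, hrange, hc | hc⟩ := hmem _ hw
          · have := hx'inj _ _ (by omega) (by omega) hc
            omega
          · exact hxy' _ _ hc
        · intro hw
          obtain ⟨s, hs, hrange, hc | hc⟩ := hmem _ hw
          · exact hxy' _ _ hc.symm
          · have := hy'inj _ _ (by omega) (by omega) hc
            omega
      · intro w hw
        simp only [Walk.support_cons, List.mem_cons] at hw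
        rcases hw with h | h | h
        · exact ⟨K + 1 - (t + 1), by omega, by omega, Or.inl h⟩
        · exact ⟨K + 1 - (t + 1), by omega, by omega, Or.inr h⟩
        · obtain ⟨s, hs, hrange, hc⟩ := hmem _ h
          exact ⟨s, hs, by omega, hc⟩
  obtain ⟨p0, hlen0, hnd0, -⟩ := key (K + 1) (by omega)
  have hz : x' (K + 1 - (K + 1)) = x' 0 := by rw [show K + 1 - (K + 1) = 0 from by omega]
  set p : G.Walk (x' 0) (y' (K + 1)) := p0.copy hz rfl with hp
  have hlen : p.length = 2 * (K + 1) + 1 := by rw [hp, Walk.length_copy, hlen0]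
  have hnd : p.support.Nodup := by rw [hp, Walk.support_copy]; exact hnd0
  have hadj1 : G.Adj (x' 0) (y' (K + 1)) := by
    have h := (h2' (K + 1)).symm
    have he : x' (K + 1 + 1) = x' 0 := by
      show x ⟨(K + 2) % (K + 2), _⟩ = x ⟨0 % (K + 2), _⟩
      apply congrArg
      apply Fin.ext
      simp
    rwa [he] at h
  have hpath2 : p.IsPath := Walk.IsPath.mk' hnd
  have hpath1 : (Walk.cons hadj1 Walk.nil).IsPath := by
    apply Walk.IsPath.mk'
    simp only [Walk.support_cons, Walk.support_nil, List.nodup_cons, List.mem_cons,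
      List.mem_singleton, List.not_mem_nil, or_false, List.nodup_singleton, and_true]
    exact ⟨hxy' _ _, not_false, List.nodup_nil⟩
  have heq := isAcyclic_iff_path_unique.mp hac ⟨Walk.cons hadj1 Walk.nil, hpath1⟩ ⟨p, hpath2⟩
  have hval : (Walk.cons hadj1 Walk.nil) = p := congrArg Subtype.val heq
  have hlen1 : (Walk.cons hadj1 (Walk.nil : G.Walk _ _)).length = p.length := by rw [hval]
  simp [hlen] at hlen1

theorem fin2_cases (i : Fin 2) : i = 0 ∨ i = 1 := by omega

theorem fin2_succ {i j : Fin 2} (h : i ≠ j) : i + 1 = j := by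
  rcases fin2_cases i with rfl | rfl <;> rcases fin2_cases j with rfl | rfl <;>
    first | rfl | (exfalso; exact h rfl) | decide

theorem forward_step {A : Type*} (X : Set (ℤ → A)) (m : ℕ)
    (hGm : AcyclicForColoring (GLmem X m))
    (hEx : ∀ u, u ∈ lang X → u.length = m → (extGraph (lang X) u).IsAcyclic) :
    AcyclicForColoring (GLmem X (m + 1)) := by
  intro n
  induction n using Nat.strong_induction_on with
  | _ n IH =>
    intro v ℓ hcyc
    -- basic facts about the cycle
    have hElen : ∀ i, (ℓ i).length = m + 1 := fun i => (hcyc.2.1 i).2.1.1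
    have hmem : ∀ i, ℓ i ∈ lang X := fun i => (hcyc.2.1 i).2.1.2.1
    have hcons : ∀ i, (v i :: ℓ i) ∈ lang X := fun i => (hcyc.2.1 i).2.1.2.2
    have hcons' : ∀ i, (v (i + 1) :: ℓ i) ∈ lang X := fun i => (hcyc.2.1 i).2.2.2.2
    have hvne : ∀ i, v i ≠ v (i + 1) := fun i => (hcyc.2.1 i).1
    have hnil : ∀ i, ℓ i ≠ [] := by
      intro i h
      have := hElen i
      rw [h] at this
      simp at this
    set u : Fin (n + 2) → List A := fun i => (ℓ i).dropLast with hu_def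
    have hsplit : ∀ i, ℓ i = u i ++ [(ℓ i).getLast (hnil i)] :=
      fun i => (List.dropLast_append_getLast (hnil i)).symm
    have hulen : ∀ i, (u i).length = m := by
      intro i
      simp only [hu_def, List.length_dropLast, hElen i]
      omega
    have humem : ∀ i, u i ∈ lang X := by
      intro i
      apply lang_prefix (w := [(ℓ i).getLast (hnil i)])
      rw [← hsplit i]
      exact hmem i
    have hucons : ∀ i, (v i :: u i) ∈ lang X := by
      intro i
      apply lang_prefix (w := [(ℓ i).getLast (hnil i)])
      rw [List.cons_append, ← hsplit i]
      exact hcons i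
    have hucons' : ∀ i, (v (i + 1) :: u i) ∈ lang X := by
      intro i
      apply lang_prefix (w := [(ℓ i).getLast (hnil i)])
      rw [List.cons_append, ← hsplit i]
      exact hcons' i
    have hedgeu : ∀ i, MEdge (GLmem X m) (u i) (v i) (v (i + 1)) :=
      fun i => ⟨hvne i, ⟨hulen i, humem i, hucons i⟩, ⟨hulen i, humem i, hucons' i⟩⟩
    -- Step 2 : all the dropLasts are equal
    have hU : ∀ i j, u i = u j := by
      rcases Nat.eq_zero_or_pos n with hn0 | hn1
      · subst hn0
        have h01 : u 0 = u 1 := by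
          by_contra hne01
          have hthird : ∀ i j : Fin 2, i ≠ j →
              ¬(u i = u j ∧ ({v i, v (i + 1)} : Set A) = {v j, v (j + 1)}) := by
            intro i j hij hc
            rcases fin2_cases i with rfl | rfl <;> rcases fin2_cases j with rfl | rfl
            · exact hij rfl
            · exact hne01 hc.1
            · exact hne01 hc.1.symm
            · exact hij rfl
          exact hne01 (hGm 0 v u ⟨hcyc.1, hedgeu, hthird⟩ 0 1)
        intro i j
        rcases fin2_cases i with rfl | rfl <;> rcases fin2_cases j with rfl | rfl <;>
          first | rfl | exact h01 | exact h01.symm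
      · obtain ⟨K, rfl⟩ : ∃ K, n = K + 1 := ⟨n - 1, by omega⟩
        exact hGm (K + 1) v u
          ⟨hcyc.1, hedgeu, fun i j hij hc => pairs_ne (by omega) hcyc.1 hij hc.2⟩
    by_cases hlinj : Function.Injective ℓ
    · -- labels injective : contradiction with the extension graph of U = u 0
      exfalso
      set c : Fin (n + 2) → A := fun i => (ℓ i).getLast (hnil i) with hc_def
      have hcinj : Function.Injective c := by
        intro i j h
        apply hlinj
        rw [hsplit i, hsplit j, hU i j]
        simp only [hc_def] at h
        rw [h]
      have hvU : ∀ i, (v i :: u 0) ∈ lang X := fun i => (hU i 0) ▸ hucons i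
      have hvU' : ∀ i, (v (i + 1) :: u 0) ∈ lang X := fun i => (hU i 0) ▸ hucons' i
      have hcU : ∀ i, (u 0 ++ [c i]) ∈ lang X := by
        intro i
        have h := hmem i
        rw [hsplit i, hU i 0] at h
        exact h
      have hfull : ∀ i, (v i :: (u 0 ++ [c i])) ∈ lang X := by
        intro i
        have h := hcons i
        rw [hsplit i, hU i 0] at h
        exact h
      have hfull' : ∀ i, (v (i + 1) :: (u 0 ++ [c i])) ∈ lang X := by
        intro i
        have h := hcons' i
        rw [hsplit i, hU i 0] at h
        exact h
      refine not_acyclic_of_alt_cycle (G := extGraph (lang X) (u 0)) (K := n)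
        (fun i => Sum.inl ⟨v i, hvU i⟩) (fun i => Sum.inr ⟨c i, hcU i⟩)
        ?_ ?_ ?_ ?_ ?_ (hEx (u 0) (humem 0) (hulen 0))
      · intro a b hab
        apply hcyc.1
        have := Sum.inl_injective hab
        exact congrArg Subtype.val this
      · intro a b hab
        apply hcinj
        have := Sum.inr_injective hab
        exact congrArg Subtype.val this
      · intro i j
        simp
      · intro i
        rw [extGraph_adj_inl_inr]
        exact hfull i
      · intro i
        exact (extGraph_adj_inl_inr.mpr (hfull' i)).symm
    · -- labels not injective : surgery
      obtain ⟨i2, j2, hl2, hne2⟩ := Function.not_injective_iff.mp hlinj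
      rcases Nat.eq_zero_or_pos n with hn0 | hn1
      · subst hn0
        exfalso
        refine hcyc.2.2 i2 j2 hne2 ⟨hl2, ?_⟩
        rw [fin2_succ hne2, fin2_succ (Ne.symm hne2)]
        exact Set.pair_comm _ _
      · obtain ⟨K, rfl⟩ : ∃ K, n = K + 1 := ⟨n - 1, by omega⟩
        have hrot := cycleM_rotate hcyc i2
        set d : Fin (K + 1 + 2) := j2 - i2 with hd_def
        have hdadd : d + i2 = j2 := by rw [hd_def]; exact sub_add_cancel j2 i2
        have hd0 : d ≠ 0 := by
          intro h
          rw [h, zero_add] at hdadd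
          exact hne2 hdadd
        have hcd : ℓ (wrap 0 + i2) = ℓ (wrap d.val + i2) := by
          rw [wrap_zero, zero_add, wrap_eq d, hdadd]
          exact hl2
        have hIH : ∀ n', n' < K + 1 → ∀ (v' : Fin (n' + 2) → A)
            (ℓ' : Fin (n' + 2) → List A), IsCycleM (GLmem X (m + 1)) n' v' ℓ' →
            ∀ i j, ℓ' i = ℓ' j := fun n' hn' => IH n' hn'
        have hdval : 1 ≤ d.val := by
          have := Fin.pos_iff_ne_zero.mpr hd0
          omega
        have hdval2 : d.val < K + 1 + 2 := d.2
        have htrans : (∀ i j : Fin (K + 1 + 2),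
            ℓ (i + i2) = ℓ (j + i2)) → ∀ i j, ℓ i = ℓ j := by
          intro h i j
          have := h (i - i2) (j - i2)
          rwa [sub_add_cancel, sub_add_cancel] at this
        rcases Nat.lt_or_ge d.val 2 with hd1 | hd2
        · -- d = 1 : collapse
          apply htrans
          apply collapse_core hrot ?_ hIH
          show ℓ (wrap 0 + i2) = ℓ (wrap 1 + i2)
          rw [show (wrap 1 : Fin (K + 1 + 2)) = wrap d.val by rw [show d.val = 1 by omega]]
          exact hcd
        · rcases Nat.lt_or_ge d.val (K + 2) with hdm | hdm
          · -- 2 ≤ d ≤ K+1 : split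
            apply htrans
            apply split_core hrot d.val hd2 (by omega) ?_ hIH
            show ℓ (wrap 0 + i2) = ℓ (wrap d.val + i2)
            exact hcd
          · -- d = K+2 : rotate once more and collapse
            have hdtop : d.val = K + 2 := by omega
            have hrot2 := cycleM_rotate hrot d
            have hcd2 : ℓ (wrap 0 + d + i2) = ℓ (wrap 1 + d + i2) := by
              have h10 : (wrap 1 : Fin (K + 1 + 2)) + d = wrap 0 := by
                rw [show d = wrap d.val from (wrap_eq d).symm, hdtop,
                  wrap_add, show 1 + (K + 2) = K + 1 + 2 by omega, wrap_top]
              rw [h10, wrap_zero, zero_add, zero_add, hdadd]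
              exact hl2.symm
            apply htrans
            intro i j
            have hall2 := collapse_core hrot2 ?_ hIH
            · have h1 := hall2 (i - d) (j - d)
              rwa [sub_add_cancel, sub_add_cancel] at h1
            · show ℓ (wrap 0 + d + i2) = ℓ (wrap 1 + d + i2)
              exact hcd2

open SimpleGraph in
theorem walk_getVert_getElem {W : Type*} {G : SimpleGraph W} {a b : W} (p : G.Walk a b) :
    ∀ (i : ℕ) (h : i < p.support.length), p.getVert i = p.support[i] := by
  induction p with
  | nil => intro i h; simp [Walk.support_nil] at h; subst h; simp [Walk.getVert]
  | cons hadj q ih =>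
    intro i h
    cases i with
    | zero => simp [Walk.getVert, Walk.support_cons]
    | succ i =>
      rw [Walk.support_cons] at h
      simp only [List.length_cons] at h
      simp only [Walk.support_cons, List.getElem_cons_succ, Walk.getVert_cons_succ]
      exact ih i (by omega)

open SimpleGraph in
theorem cycle_getVert_inj {W : Type*} {G : SimpleGraph W} {a : W} {p : G.Walk a a}
    (hp : p.IsCycle) : ∀ i j : ℕ, i < p.length → j < p.length →
      p.getVert i = p.getVert j → i = j := by
  have hnd : p.support.tail.Nodup := hp.support_nodup
  have ht : p.support.tail.length = p.length := by
    rw [List.length_tail, Walk.length_support]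
    omega
  have hlen3 := hp.three_le_length
  have htail : ∀ (i : ℕ) (_ : i < p.length),
      p.getVert (i + 1) = p.support.tail[i]'(by omega) := by
    intro i h
    rw [List.getElem_tail]
    exact walk_getVert_getElem p (i + 1) (by rw [Walk.length_support]; omega)
  have hfirst : p.getVert 0 = p.getVert p.length := by
    rw [Walk.getVert_zero, Walk.getVert_length]
  have hJ : ∀ (t : ℕ) (_ : t < p.length),
      p.getVert t = p.support.tail[if t = 0 then p.length - 1 else t - 1]'(by split <;> omega) := by
    intro t htl
    split
    · next h0 =>
      subst h0
      rw [hfirst]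
      conv_lhs => rw [show p.length = (p.length - 1) + 1 by omega]
      exact htail _ (by omega)
    · next h0 =>
      conv_lhs => rw [show t = (t - 1) + 1 by omega]
      exact htail _ (by omega)
  intro i j hi hj h
  rw [hJ i hi, hJ j hj] at h
  have h2 := (List.Nodup.getElem_inj_iff hnd).mp h
  split at h2 <;> split at h2 <;> omega

open SimpleGraph in
theorem backward_core {A : Type*} {X : Set (ℤ → A)} {V : List A}
    (hAc : AcyclicForColoring (GLmem X (V.length + 1)))
    (a0 : {a : A // a :: V ∈ lang X})
    (cyc : (extGraph (lang X) V).Walk (Sum.inl a0) (Sum.inl a0))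
    (hcyc : cyc.IsCycle) : False := by
  set letter : ({a : A // a :: V ∈ lang X} ⊕ {b : A // V ++ [b] ∈ lang X}) → A :=
    Sum.elim Subtype.val Subtype.val with hletter
  have hside : ∀ p q, (extGraph (lang X) V).Adj p q → p.isLeft = !q.isLeft := by
    intro p q h
    rcases p with l | r <;> rcases q with l' | r'
    · exact absurd h extGraph_not_adj_inl
    · simp
    · simp
    · exact absurd h extGraph_not_adj_inr
  have hpar : ∀ i, i ≤ cyc.length → (cyc.getVert i).isLeft = decide (i % 2 = 0) := by
    intro i
    induction i with
    | zero => intro _; simp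
    | succ i ih =>
      intro hi
      have h1 := hside _ _ (cyc.adj_getVert_succ (show i < cyc.length by omega))
      have h2 : (cyc.getVert (i + 1)).isLeft = !(cyc.getVert i).isLeft := by
        rw [h1, Bool.not_not]
      rw [h2, ih (by omega)]
      rcases Nat.mod_two_eq_zero_or_one i with h | h
      · have h3 : (i + 1) % 2 = 1 := by omega
        simp [h, h3]
      · have h3 : (i + 1) % 2 = 0 := by omega
        simp [h, h3]
  have hlen_even : cyc.length % 2 = 0 := by
    have h := hpar cyc.length le_rfl
    rw [Walk.getVert_length] at h
    simp only [Sum.isLeft_inl] at h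
    by_contra hodd
    rw [decide_eq_false hodd] at h
    exact Bool.true_eq_false.mp h
  have hlen3 := hcyc.three_le_length
  obtain ⟨K, hK⟩ : ∃ K, cyc.length = 2 * K + 4 := ⟨(cyc.length - 4) / 2, by omega⟩
  have hInl : ∀ s, s ≤ cyc.length → s % 2 = 0 →
      ∃ l, cyc.getVert s = Sum.inl l := by
    intro s h1 h2
    have h := hpar s h1
    rw [decide_eq_true h2] at h
    exact Sum.isLeft_iff.mp h
  have hInr : ∀ s, s ≤ cyc.length → s % 2 = 1 →
      ∃ r, cyc.getVert s = Sum.inr r := by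
    intro s h1 h2
    have h := hpar s h1
    rw [decide_eq_false (by omega)] at h
    rcases hx : cyc.getVert s with l | r
    · rw [hx] at h; simp at h
    · exact ⟨r, rfl⟩
  have hmemb : ∀ s, s ≤ cyc.length → s % 2 = 1 →
      (V ++ [letter (cyc.getVert s)]) ∈ lang X := by
    intro s h1 h2
    obtain ⟨r, hr⟩ := hInr s h1 h2
    rw [hr]
    exact r.2
  have hinjE : ∀ s t, s < cyc.length → t < cyc.length → s % 2 = t % 2 →
      letter (cyc.getVert s) = letter (cyc.getVert t) → s = t := by
    intro s t hs ht hpareq h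
    rcases Nat.mod_two_eq_zero_or_one s with hp | hp
    · obtain ⟨l1, hl1⟩ := hInl s (by omega) hp
      obtain ⟨l2, hl2⟩ := hInl t (by omega) (by omega)
      rw [hl1, hl2] at h
      apply cycle_getVert_inj hcyc s t hs ht
      rw [hl1, hl2, Subtype.ext h]
    · obtain ⟨r1, hr1⟩ := hInr s (by omega) hp
      obtain ⟨r2, hr2⟩ := hInr t (by omega) (by omega)
      rw [hr1, hr2] at h
      apply cycle_getVert_inj hcyc s t hs ht
      rw [hr1, hr2, Subtype.ext h]
  have hadj1 : ∀ s, s < cyc.length → s % 2 = 0 →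
      (letter (cyc.getVert s) :: (V ++ [letter (cyc.getVert (s + 1))])) ∈ lang X := by
    intro s hs hp
    have hadj := cyc.adj_getVert_succ hs
    obtain ⟨l, hl⟩ := hInl s (by omega) hp
    obtain ⟨r, hr⟩ := hInr (s + 1) (by omega) (by omega)
    rw [hl, hr] at hadj
    rw [hl, hr]
    exact extGraph_adj_inl_inr.mp hadj
  have hadj2 : ∀ s, s < cyc.length → s % 2 = 1 →
      (letter (cyc.getVert (s + 1)) :: (V ++ [letter (cyc.getVert s)])) ∈ lang X := by
    intro s hs hp
    have hadj := cyc.adj_getVert_succ hs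
    obtain ⟨r, hr⟩ := hInr s (by omega) hp
    obtain ⟨l, hl⟩ := hInl (s + 1) (by omega) (by omega)
    rw [hr, hl] at hadj
    rw [hr, hl]
    exact extGraph_adj_inl_inr.mp hadj.symm
  -- build the colored cycle
  have hcycleM := isCycleM_of_nat' (M := GLmem X (V.length + 1)) (K := K)
    (fun s => letter (cyc.getVert (2 * s)))
    (fun s => V ++ [letter (cyc.getVert (2 * s + 1))])
    ?_ ?_ ?_ ?_
  · have h01 := hAc K _ _ hcycleM 0 1
    simp only [Fin.val_zero, Fin.val_one] at h01
    have hb := List.append_cancel_left h01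
    simp only [List.cons.injEq, and_true] at hb
    have := hinjE 1 3 (by omega) (by omega) (by omega) (by simpa using hb)
    omega
  · intro a b ha hb h
    have := hinjE (2 * a) (2 * b) (by omega) (by omega) (by omega) h
    omega
  · intro a b ha hb h
    have hb2 := List.append_cancel_left h
    simp only [List.cons.injEq, and_true] at hb2
    have := hinjE (2 * a + 1) (2 * b + 1) (by omega) (by omega) (by omega) (by simpa using hb2)
    omega
  · intro s hs
    refine ⟨?_, ⟨by simp, hmemb (2 * s + 1) (by omega) (by omega), hadj1 (2 * s) (by omega) (by omega)⟩,
      ⟨by simp, hmemb (2 * s + 1) (by omega) (by omega), ?_⟩⟩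
    · intro h
      have := hinjE (2 * s) (2 * (s + 1)) (by omega) (by omega) (by omega) h
      omega
    · have h := hadj2 (2 * s + 1) (by omega) (by omega)
      simpa [show 2 * s + 1 + 1 = 2 * (s + 1) by omega] using h
  · refine ⟨?_, ⟨by simp, hmemb (2 * (K + 1) + 1) (by omega) (by omega),
      hadj1 (2 * (K + 1)) (by omega) (by omega)⟩,
      ⟨by simp, hmemb (2 * (K + 1) + 1) (by omega) (by omega), ?_⟩⟩
    · intro h
      have := hinjE (2 * (K + 1)) (2 * 0) (by omega) (by omega) (by omega) h
      omega
    · have h := hadj2 (2 * (K + 1) + 1) (by omega) (by omega)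
      have he : cyc.getVert (2 * (K + 1) + 1 + 1) = cyc.getVert (2 * 0) := by
        rw [show 2 * (K + 1) + 1 + 1 = cyc.length from by omega, Walk.getVert_length]
        rw [show 2 * 0 = 0 by omega, Walk.getVert_zero]
      rwa [he] at h

open SimpleGraph in
theorem backward_dir {A : Type*} {X : Set (ℤ → A)} {N : ℕ}
    (hAll : ∀ n ≤ N, AcyclicForColoring (GLmem X n)) :
    ∀ v ∈ lang X, v.length < N → (extGraph (lang X) v).IsAcyclic := by
  intro V hV hVN x0 cyc hcyc
  classical
  have hAc := hAll (V.length + 1) (by omega)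
  have h1len : 0 < cyc.length := by have := hcyc.three_le_length; omega
  rcases x0 with a0 | b0
  · exact backward_core hAc a0 cyc hcyc
  · have hmem1 : cyc.getVert 1 ∈ cyc.support :=
      Walk.mem_support_iff_exists_getVert.mpr ⟨1, rfl, by omega⟩
    have hcyc' := hcyc.rotate hmem1
    have hadj := cyc.adj_getVert_succ h1len
    rw [Walk.getVert_zero] at hadj
    rcases hx : cyc.getVert 1 with l | r
    · have hcyc2 : ((cyc.rotate _ hmem1).copy hx hx).IsCycle := by
        rw [Walk.isCycle_copy]
        exact hcyc'
      exact backward_core hAc l _ hcyc2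
    · rw [hx] at hadj
      exact extGraph_not_adj_inr hadj

/-- The extension graph `E_X(v)` is acyclic for every factor `v` of length `< N` if and
only if, for every `n ≤ N`, the graph `G^L_n(X)` is acyclic for the labeling. -/
theorem stmt_12 {A : Type*} [TopologicalSpace A] [DiscreteTopology A]
    (X : Set (ℤ → A)) (hX : IsShiftSpace X) (N : ℕ) :
    (∀ v ∈ lang X, v.length < N → (extGraph (lang X) v).IsAcyclic)
      ↔ ∀ n ≤ N, AcyclicForColoring (GLmem X n) := by
  constructor
  · intro hforest n
    induction n with
    | zero =>
      intro _
      intro k v ℓ hcyc i j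
      have h1 : (ℓ i).length = 0 := (hcyc.2.1 i).2.1.1
      have h2 : (ℓ j).length = 0 := (hcyc.2.1 j).2.1.1
      rw [List.length_eq_zero_iff] at h1 h2
      rw [h1, h2]
    | succ m ih =>
      intro hn
      exact forward_step X m (ih (by omega))
        (fun u hu hlen => hforest u hu (by omega))
  · intro hAll v hv hlen
    exact backward_dir hAll v hv hlen
end

section
/- A shift space X is dendric if and only if for all n ∈ ℕ the graph G^L_n(X) is acyclic for the labeling and connected. -/
namespace DendricAux

open SimpleGraph Walk
open Fin.NatCast Fin.CommRing



variable {A : Type*} {X : Set (ℤ → A)}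

lemma factorOf_take {u : List A} {x : ℤ → A} (h : FactorOf u x) (m : ℕ) :
    FactorOf (u.take m) x := by
  obtain ⟨i, hi⟩ := h
  refine ⟨i, fun k => ?_⟩
  have hk : (k : ℕ) < u.length := lt_of_lt_of_le k.2 (by simp [List.length_take])
  have := hi ⟨k, hk⟩
  simpa [List.get_eq_getElem, List.getElem_take] using this

lemma factorOf_drop {u : List A} {x : ℤ → A} (h : FactorOf u x) (m : ℕ) :
    FactorOf (u.drop m) x := by
  obtain ⟨i, hi⟩ := h
  refine ⟨i + m, fun k => ?_⟩
  have hk : m + (k : ℕ) < u.length := by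
    have := k.2; simp [List.length_drop] at this; omega
  have := hi ⟨m + k, hk⟩
  simp only [List.get_eq_getElem] at this
  simp only [List.get_eq_getElem, List.getElem_drop]
  rw [show i + (m : ℤ) + ((k:ℕ) : ℤ) = i + ((m + (k : ℕ) : ℕ) : ℤ) by push_cast; ring]
  exact this

lemma lang_take {u : List A} (h : u ∈ lang X) (m : ℕ) : u.take m ∈ lang X := by
  obtain ⟨x, hx, hf⟩ := h; exact ⟨x, hx, factorOf_take hf m⟩

lemma lang_drop {u : List A} (h : u ∈ lang X) (m : ℕ) : u.drop m ∈ lang X := by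
  obtain ⟨x, hx, hf⟩ := h; exact ⟨x, hx, factorOf_drop hf m⟩

lemma lang_of_cons {a : A} {u : List A} (h : a :: u ∈ lang X) : u ∈ lang X := by
  have := lang_drop h 1; simpa using this

lemma lang_nil (h : X.Nonempty) : ([] : List A) ∈ lang X := by
  obtain ⟨x, hx⟩ := h
  exact ⟨x, hx, 0, fun k => absurd k.2 (by simp)⟩

lemma exists_cons_lang {u : List A} (h : u ∈ lang X) : ∃ a, a :: u ∈ lang X := by
  obtain ⟨x, hx, i, hi⟩ := h
  refine ⟨x (i - 1), x, hx, i - 1, fun k => ?_⟩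
  rcases k with ⟨kv, hkv⟩
  match kv, hkv with
  | 0, _ => simp
  | (j+1), hj =>
    have hj' : j < u.length := by simpa using hj
    have := hi ⟨j, hj'⟩
    simp only [List.get_eq_getElem] at this ⊢
    rw [show i - 1 + ((j+1 : ℕ) : ℤ) = i + (j : ℕ) by push_cast; ring]
    simpa using this

lemma exists_append_lang {u : List A} (h : u ∈ lang X) : ∃ b, u ++ [b] ∈ lang X := by
  obtain ⟨x, hx, i, hi⟩ := h
  refine ⟨x (i + u.length), x, hx, i, fun k => ?_⟩
  rcases k with ⟨kv, hkv⟩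
  have hkv' : kv < u.length + 1 := by simpa using hkv
  rcases lt_or_ge kv u.length with hlt | hge
  · have := hi ⟨kv, hlt⟩
    simp only [List.get_eq_getElem] at this ⊢
    rw [List.getElem_append_left hlt]
    exact this
  · have hkv2 : kv = u.length := by omega
    subst hkv2
    simp only [List.get_eq_getElem]
    rw [List.getElem_append_right (le_refl _)]
    simp

def bipRel {α β : Type*} (r : α → β → Prop) : SimpleGraph (α ⊕ β) :=
  SimpleGraph.fromRel (fun p q =>
    match p, q with
    | Sum.inl a, Sum.inr b => r a b
    | _, _ => False)

variable {α β : Type*} {r : α → β → Prop}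

lemma bipRel_adj_inl_inr {a : α} {b : β} :
    (bipRel r).Adj (Sum.inl a) (Sum.inr b) ↔ r a b := by
  simp only [bipRel, SimpleGraph.fromRel_adj]
  constructor
  · rintro ⟨-, h | h⟩
    · exact h
    · exact h.elim
  · intro h
    exact ⟨by simp, Or.inl h⟩

lemma bipRel_adj_inr_inl {a : α} {b : β} :
    (bipRel r).Adj (Sum.inr b) (Sum.inl a) ↔ r a b := by
  rw [SimpleGraph.adj_comm]; exact bipRel_adj_inl_inr

lemma bipRel_not_adj_inl_inl {a a' : α} : ¬ (bipRel r).Adj (Sum.inl a) (Sum.inl a') := by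
  simp only [bipRel, SimpleGraph.fromRel_adj]
  rintro ⟨-, h | h⟩ <;> exact h

lemma bipRel_not_adj_inr_inr {b b' : β} : ¬ (bipRel r).Adj (Sum.inr b) (Sum.inr b') := by
  simp only [bipRel, SimpleGraph.fromRel_adj]
  rintro ⟨-, h | h⟩ <;> exact h

lemma bipRel_adj_cases {p q : α ⊕ β} (h : (bipRel r).Adj p q) :
    (∃ a b, p = Sum.inl a ∧ q = Sum.inr b ∧ r a b) ∨
      (∃ a b, p = Sum.inr b ∧ q = Sum.inl a ∧ r a b) := by
  match p, q with
  | Sum.inl a, Sum.inl a' => exact absurd h bipRel_not_adj_inl_inl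
  | Sum.inr b, Sum.inr b' => exact absurd h bipRel_not_adj_inr_inr
  | Sum.inl a, Sum.inr b => exact Or.inl ⟨a, b, rfl, rfl, bipRel_adj_inl_inr.mp h⟩
  | Sum.inr b, Sum.inl a => exact Or.inr ⟨a, b, rfl, rfl, bipRel_adj_inr_inl.mp h⟩

section WalkLemmas

variable {V : Type*} {G : SimpleGraph V}

lemma walk_support_getElem? : ∀ {u v : V} (p : G.Walk u v) (i : ℕ), i ≤ p.length →
    p.support[i]? = some (p.getVert i) := by
  intro u v p
  induction p with
  | nil =>
    intro i hi
    have : i = 0 := by simpa using hi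
    subst this
    simp [Walk.getVert]
  | cons h q ih =>
    intro i hi
    match i with
    | 0 => simp [Walk.getVert]
    | (i + 1) =>
      rw [Walk.support_cons, List.getElem?_cons_succ, Walk.getVert_cons_succ]
      exact ih i (by simpa using hi)

lemma length_rotate [DecidableEq V] {u v : V} (c : G.Walk v v) (h : u ∈ c.support) :
    (c.rotate u h).length = c.length := by
  have hrot : c.rotate u h = (c.dropUntil u h).append (c.takeUntil u h) := rfl
  rw [hrot, Walk.length_append, add_comm, ← Walk.length_append, Walk.take_spec]

lemma cycle_getVert_inj {u : V} {p : G.Walk u u} (hp : p.IsCycle) {i j : ℕ}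
    (hi : i < p.length) (hj : j < p.length) (hij : p.getVert i = p.getVert j) : i = j := by
  have hnd : p.support.tail.Nodup := hp.support_nodup
  have hlen : p.support.length = p.length + 1 := p.length_support
  have hcons : p.support = u :: p.support.tail := p.support_eq_cons
  have htl : p.support.tail.length = p.length := by
    have h2 : (u :: p.support.tail).length = p.length + 1 := by rw [← hcons, hlen]
    simpa using h2
  have key : ∀ k : ℕ, k ≤ p.length → 1 ≤ k → p.support.tail[k-1]? = some (p.getVert k) := by
    intro k hk h1
    have := walk_support_getElem? p k hk
    rw [hcons] at this
    match k, h1 with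
    | (k+1), _ => simpa using this
  -- getVert 0 = getVert length
  have h0len : p.getVert 0 = p.getVert p.length := by
    rw [Walk.getVert_zero, Walk.getVert_length]
  rcases Nat.eq_zero_or_pos i with rfl | hi1 <;> rcases Nat.eq_zero_or_pos j with rfl | hj1
  · rfl
  · -- i = 0 : getVert j = u while also getVert length = u
    exfalso
    have e1 := key j hj.le hj1
    have e2 := key p.length le_rfl (by omega)
    rw [← hij, h0len] at e1
    have := List.getElem?_inj (by omega : j - 1 < p.support.tail.length) hnd |>.mp (e1.trans e2.symm)
    omega
  · exfalso
    have e1 := key i hi.le hi1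
    have e2 := key p.length le_rfl (by omega)
    rw [hij, h0len] at e1
    have := List.getElem?_inj (by omega : i - 1 < p.support.tail.length) hnd |>.mp (e1.trans e2.symm)
    omega
  · have e1 := key i hi.le hi1
    have e2 := key j hj.le hj1
    rw [hij] at e1
    have := List.getElem?_inj (by omega : i - 1 < p.support.tail.length) hnd |>.mp (e1.trans e2.symm)
    omega

end WalkLemmas

lemma bipRel_walk_parity {u v : α ⊕ β} (p : (bipRel r).Walk u v) (a0 : α)
    (hu : u = Sum.inl a0) :
    ∀ i, i ≤ p.length →
      (Even i → ∃ a, p.getVert i = Sum.inl a) ∧ (¬ Even i → ∃ b, p.getVert i = Sum.inr b) := by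
  intro i
  induction i with
  | zero =>
    intro _
    refine ⟨fun _ => ⟨a0, by simpa [Walk.getVert_zero] using hu⟩, fun h => absurd Even.zero h⟩
  | succ i ih =>
    intro hi
    have ihi := ih (by omega)
    have hadj := p.adj_getVert_succ (by omega : i < p.length)
    by_cases he : Even i
    · obtain ⟨a, ha⟩ := ihi.1 he
      rw [ha] at hadj
      rcases bipRel_adj_cases hadj with ⟨a', b', heq, hq, -⟩ | ⟨a', b', heq, hq, -⟩
      · exact ⟨fun h => absurd he (by simpa [Nat.even_add_one] using h),
          fun _ => ⟨b', hq⟩⟩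
      · exact absurd heq (by simp)
    · obtain ⟨b, hb⟩ := ihi.2 he
      rw [hb] at hadj
      rcases bipRel_adj_cases hadj with ⟨a', b', heq, hq, -⟩ | ⟨a', b', heq, hq, -⟩
      · exact absurd heq (by simp)
      · refine ⟨fun _ => ⟨a', hq⟩, fun h => absurd ?_ h⟩
        simpa [Nat.even_add_one] using he

lemma bipRel_acyclic_aux
    (H : ∀ (m : ℕ) (va : Fin (m + 2) → α) (wb : Fin (m + 2) → β),
      Function.Injective va → Function.Injective wb →
      (∀ i, r (va i) (wb i) ∧ r (va (i + 1)) (wb i)) → False)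
    {x : α} (c : (bipRel r).Walk (Sum.inl x) (Sum.inl x)) (hc : c.IsCycle) : False := by
  have h3 := hc.three_le_length
  have hpar := bipRel_walk_parity c x rfl
  have heven : Even c.length := by
    by_contra hodd
    obtain ⟨b, hb⟩ := (hpar c.length le_rfl).2 hodd
    rw [Walk.getVert_length] at hb
    exact absurd hb (by simp)
  obtain ⟨m, hm⟩ := heven
  have hm' : c.length = 2 * m := by omega
  have hm2 : 2 ≤ m := by omega
  obtain ⟨m', rfl⟩ : ∃ m', m = m' + 2 := ⟨m - 2, by omega⟩
  have hL : ∀ i : Fin (m' + 2), ∃ a, c.getVert (2 * i.val) = Sum.inl a := by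
    intro i
    exact (hpar (2 * i.val) (by have := i.2; omega)).1 (even_two_mul _)
  have hR : ∀ i : Fin (m' + 2), ∃ b, c.getVert (2 * i.val + 1) = Sum.inr b := by
    intro i
    refine (hpar (2 * i.val + 1) (by have := i.2; omega)).2 (by simp [Nat.even_add_one, parity_simps])
  choose va hva using hL
  choose wb hwb using hR
  have hva_inj : Function.Injective va := by
    intro i j hij
    have : c.getVert (2 * i.val) = c.getVert (2 * j.val) := by rw [hva i, hva j, hij]
    have := cycle_getVert_inj hc (by have := i.2; omega) (by have := j.2; omega) this
    exact Fin.ext (by omega)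
  have hwb_inj : Function.Injective wb := by
    intro i j hij
    have : c.getVert (2 * i.val + 1) = c.getVert (2 * j.val + 1) := by rw [hwb i, hwb j, hij]
    have := cycle_getVert_inj hc (by have := i.2; omega) (by have := j.2; omega) this
    exact Fin.ext (by omega)
  have hnext : ∀ i : Fin (m' + 2), c.getVert (2 * i.val + 2) = Sum.inl (va (i + 1)) := by
    intro i
    rcases eq_or_ne i (Fin.last (m' + 1)) with rfl | hne
    · have : (Fin.last (m' + 1) + 1) = 0 := by
        simp
      rw [this]
      have hlast : 2 * (Fin.last (m' + 1)).val + 2 = c.length := by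
        simp [Fin.last]; omega
      rw [hlast, Walk.getVert_length]
      rw [← Walk.getVert_zero c]
      exact hva 0
    · have hv : (i + 1).val = i.val + 1 := by
        rw [Fin.val_add_one]
        simp [hne]
      have := hva (i + 1)
      rw [hv] at this
      rw [show 2 * i.val + 2 = 2 * (i.val + 1) by ring]
      exact this
  apply H m' va wb hva_inj hwb_inj
  intro i
  constructor
  · have hadj := c.adj_getVert_succ (by have := i.2; omega : 2 * i.val < c.length)
    rw [hva i, hwb i] at hadj
    exact bipRel_adj_inl_inr.mp hadj
  · have hadj := c.adj_getVert_succ (by have := i.2; omega : 2 * i.val + 1 < c.length)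
    rw [hwb i, show 2 * i.val + 1 + 1 = 2 * i.val + 2 by ring, hnext i] at hadj
    exact bipRel_adj_inr_inl.mp hadj

lemma bipRel_acyclic
    (H : ∀ (m : ℕ) (va : Fin (m + 2) → α) (wb : Fin (m + 2) → β),
      Function.Injective va → Function.Injective wb →
      (∀ i, r (va i) (wb i) ∧ r (va (i + 1)) (wb i)) → False) :
    (bipRel r).IsAcyclic := by
  classical
  intro z c hc
  match z with
  | Sum.inl x => exact bipRel_acyclic_aux H c hc
  | Sum.inr b =>
    have h3 := hc.three_le_length
    have hadj := c.adj_getVert_succ (by omega : 0 < c.length)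
    rw [Walk.getVert_zero] at hadj
    rcases bipRel_adj_cases hadj with ⟨a', b', heq, -, -⟩ | ⟨a', b', -, hq, -⟩
    · exact absurd heq (by simp)
    · have hmem : c.getVert 1 ∈ c.support :=
        Walk.mem_support_iff_exists_getVert.mpr ⟨1, rfl, by omega⟩
      have hc' := hc.rotate hmem
      exact bipRel_acyclic_aux H ((c.rotate _ hmem).copy hq hq)
        ((Walk.isCycle_copy _ hq).mpr hc')
/-- Extract an alternating chain from reachability between two left vertices in a
bipartite graph. -/
lemma bipRel_reach {a a' : α}
    (h : (bipRel r).Reachable (Sum.inl a) (Sum.inl a')) :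
    Relation.ReflTransGen (fun x x' => ∃ b, r x b ∧ r x' b) a a' := by
  rw [SimpleGraph.reachable_iff_reflTransGen] at h
  have key : ∀ p, Relation.ReflTransGen (bipRel r).Adj (Sum.inl a) p →
      (∀ c, p = Sum.inl c → Relation.ReflTransGen (fun x x' => ∃ b, r x b ∧ r x' b) a c) ∧
      (∀ d, p = Sum.inr d → ∃ c, Relation.ReflTransGen (fun x x' => ∃ b, r x b ∧ r x' b) a c
        ∧ r c d) := by
    intro p hp
    induction hp with
    | refl =>
      constructor
      · rintro c hc; cases hc; exact Relation.ReflTransGen.refl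
      · rintro d hd; cases hd
    | tail hstep hadj ih =>
      rename_i q p'
      rcases bipRel_adj_cases hadj with ⟨c, d, rfl, rfl, hr⟩ | ⟨c, d, rfl, rfl, hr⟩
      · constructor
        · rintro c' hc'; cases hc'
        · rintro d' hd'
          cases hd'
          exact ⟨c, (ih.1 c rfl), hr⟩
      · constructor
        · rintro c' hc'
          cases hc'
          obtain ⟨c₀, hc₀, hc₀d⟩ := ih.2 d rfl
          exact hc₀.tail ⟨d, hc₀d, hr⟩
        · rintro d' hd'; cases hd'
  exact (key _ h).1 a' rfl

lemma fin_one_ne_zero' {n : ℕ} : (1 : Fin (n + 2)) ≠ 0 := by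
  intro h
  have := congrArg Fin.val h
  simp [Fin.val_one] at this

lemma fin_succ_ne_self {n : ℕ} (i : Fin (n + 2)) : i + 1 ≠ i := by
  intro h
  have : (1 : Fin (n+2)) = 0 := by
    have := congrArg (fun x => x - i) h
    simpa [add_comm, sub_self] using this
  exact fin_one_ne_zero' this

lemma sym2_ne {V : Type*} {x y z w : V} (h1 : ¬(x = z ∧ y = w)) (h2 : ¬(x = w ∧ y = z)) :
    s(x, y) ≠ s(z, w) := by
  rw [Ne, Sym2.eq_iff]; tauto

/-- In an acyclic graph, a closed chain `a 0 - b 0 - a 1 - b 1 - ⋯ - a (n+1) - b (n+1) - a 0`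
with distinct `a`'s (and `a`'s disjoint from `b`'s) has all `b`'s equal. -/
lemma chain_eq_of_acyclic {V : Type*} {G : SimpleGraph V} (hG : G.IsAcyclic) {n : ℕ}
    {a b : Fin (n + 2) → V} (ha : Function.Injective a) (hab : ∀ i j, a i ≠ b j)
    (h1 : ∀ i, G.Adj (a i) (b i)) (h2 : ∀ i, G.Adj (b i) (a (i + 1))) :
    ∀ i, b i = b (i + 1) := by
  intro i
  by_contra hne
  have hbr : G.IsBridge s(b i, a (i + 1)) :=
    isAcyclic_iff_forall_adj_isBridge.mp hG (h2 i)
  rw [isBridge_iff_adj_and_forall_walk_mem_edges] at hbr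
  have key : ∀ j : ℕ, j ≤ n + 1 →
      ∃ w : G.Walk (a (i + 1)) (a (i + 1 + (j : Fin (n + 2)))),
        s(b i, a (i + 1)) ∉ w.edges := by
    intro j hj
    induction j with
    | zero =>
      have h0 : i + 1 + ((0 : ℕ) : Fin (n + 2)) = i + 1 := by simp
      rw [h0]
      exact ⟨Walk.nil, by simp⟩
    | succ j ih =>
      set k : Fin (n + 2) := i + 1 + (j : Fin (n + 2)) with hk
      obtain ⟨w, hw⟩ := ih (by omega)
      have hcast : i + 1 + ((j + 1 : ℕ) : Fin (n + 2)) = k + 1 := by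
        push_cast; rw [hk]; ring
      have e1 : s(a k, b k) ≠ s(b i, a (i + 1)) := by
        apply sym2_ne
        · rintro ⟨hh, -⟩; exact hab k i hh
        · rintro ⟨hh1, hh2⟩
          have hk1 : k = i + 1 := ha hh1
          have hj0 : (j : Fin (n + 2)) = 0 := by
            rw [hk] at hk1
            have hk1' : i + 1 + (j : Fin (n + 2)) = i + 1 + 0 := by rw [add_zero]; exact hk1
            exact add_left_cancel hk1'
          rw [Fin.natCast_eq_zero] at hj0
          have : j = 0 := Nat.eq_zero_of_dvd_of_lt hj0 (by omega)
          subst this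
          apply hne
          have : k = i + 1 := hk1
          rw [this] at hh2
          exact hh2.symm
      have e2 : s(b k, a (k + 1)) ≠ s(b i, a (i + 1)) := by
        apply sym2_ne
        · rintro ⟨-, hh2⟩
          have hki : k = i := by
            have := ha hh2
            exact add_right_cancel this
          rw [hk] at hki
          have hki' : i + (1 + (j : Fin (n + 2))) = i + 0 := by
            rw [add_zero, ← add_assoc]; exact hki
          have hj1 : (1 : Fin (n + 2)) + (j : Fin (n + 2)) = 0 := add_left_cancel hki'
          have hcj : ((j + 1 : ℕ) : Fin (n + 2)) = 0 := by
            push_cast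
            rw [add_comm ((j : Fin (n + 2))) 1]
            exact hj1
          rw [Fin.natCast_eq_zero] at hcj
          have := Nat.eq_zero_of_dvd_of_lt hcj (by omega)
          omega
        · rintro ⟨hh1, -⟩
          exact hab (i + 1) k hh1.symm
      rw [hcast]
      refine ⟨w.append (Walk.cons (h1 k) (Walk.cons (h2 k) Walk.nil)), ?_⟩
      rw [Walk.edges_append]
      simp only [Walk.edges_cons, Walk.edges_nil, List.mem_append, List.mem_cons,
        List.not_mem_nil, or_false]
      rintro (h | h | h)
      · exact hw h
      · exact e1 h.symm
      · exact e2 h.symm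
  have key' := key (n + 1) le_rfl
  have h0 : (n : Fin (n + 2)) + 2 = 0 := by
    have : ((n + 2 : ℕ) : Fin (n + 2)) = 0 := by
      rw [Fin.natCast_eq_zero]
    push_cast at this
    exact this
  have hcast : i + 1 + ((n + 1 : ℕ) : Fin (n + 2)) = i := by
    push_cast
    rw [show i + 1 + ((n : Fin (n + 2)) + 1) = i + ((n : Fin (n + 2)) + 2) by ring, h0,
      add_zero]
  rw [hcast] at key'
  obtain ⟨w, hw⟩ := key'
  have hmem := hbr (Walk.cons (h1 i).symm w.reverse)
  simp only [Walk.edges_cons, List.mem_cons, Walk.edges_reverse, List.mem_reverse] at hmem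
  rcases hmem with h | h
  · refine sym2_ne ?_ ?_ h.symm
    · rintro ⟨-, hh⟩
      exact fin_succ_ne_self i (ha hh).symm
    · rintro ⟨hh, -⟩
      exact hab (i + 1) i hh.symm
  · exact hw h

lemma cyclic_const {V : Type*} {n : ℕ} {f : Fin (n + 2) → V} (h : ∀ i, f i = f (i + 1)) :
    ∀ i j, f i = f j := by
  have key : ∀ (k : ℕ) (i : Fin (n + 2)), f i = f (i + (k : Fin (n + 2))) := by
    intro k
    induction k with
    | zero => intro i; simp
    | succ k ih =>
      intro i
      rw [ih i, h (i + (k : Fin (n + 2)))]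
      congr 1
      push_cast
      ring
  intro i j
  have := key (j - i).val i
  rwa [Fin.cast_val_eq_self, add_comm, sub_add_cancel] at this

lemma pair_ne_of_inj {V : Type*} {n : ℕ} (hn : 1 ≤ n) {v : Fin (n + 2) → V}
    (hv : Function.Injective v) :
    ∀ i j, i ≠ j → ({v i, v (i + 1)} : Set V) ≠ {v j, v (j + 1)} := by
  intro i j hij heq
  have m1 : v i ∈ ({v j, v (j + 1)} : Set V) := by
    rw [← heq]; exact Set.mem_insert _ _
  have m2 : v (i + 1) ∈ ({v j, v (j + 1)} : Set V) := by
    rw [← heq]; exact Set.mem_insert_iff.mpr (Or.inr rfl)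
  rcases m1 with h1 | h1 <;> rcases m2 with h2 | h2
  · exact hij (hv h1)
  · exact hij (hv h1)
  · -- v i = v (j+1) and v (i+1) = v j
    have e1 : i = j + 1 := hv h1
    have e2 : i + 1 = j := hv h2
    have : j + 2 = j := by
      rw [show (2 : Fin (n+2)) = 1 + 1 by norm_num, ← add_assoc, ← e1, e2]
    have h20 : (2 : Fin (n + 2)) = 0 := by
      have := congrArg (fun x => x - j) this
      simpa [add_comm, sub_self] using this
    have : ((2 : ℕ) : Fin (n + 2)) = 0 := by push_cast; exact h20
    rw [Fin.natCast_eq_zero] at this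
    have := Nat.le_of_dvd (by omega) this
    omega
  · exact hij (add_right_cancel ((hv h2) : i + 1 = j + 1))


section TkGraphs

variable {A : Type*} {X : Set (ℤ → A)}

/-- The vertex type for right words of length `k`. -/
def Wt (X : Set (ℤ → A)) (k : ℕ) := {w : List A // w ∈ lang X ∧ w.length = k}

/-- The bipartite incidence graph of letters and words of length `k`. -/
def Tk (X : Set (ℤ → A)) (k : ℕ) : SimpleGraph (A ⊕ Wt X k) :=
  bipRel (fun a w => a :: w.1 ∈ lang X)

/-- Projection homomorphism `Tk X (k+1) → Tk X k` (drop the last letter of a word). -/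
def TkProj (X : Set (ℤ → A)) (k : ℕ) : Tk X (k + 1) →g Tk X k where
  toFun := Sum.map id (fun w => ⟨w.1.take k, lang_take w.2.1 k, by
    simp [List.length_take, w.2.2]⟩)
  map_rel' := by
    intro p q h
    rcases bipRel_adj_cases h with ⟨a, w, rfl, rfl, hr⟩ | ⟨a, w, rfl, rfl, hr⟩
    · apply bipRel_adj_inl_inr.mpr
      have : (a :: w.1).take (k + 1) ∈ lang X := lang_take hr (k + 1)
      simpa [List.take_succ_cons] using this
    · apply bipRel_adj_inr_inl.mpr
      have : (a :: w.1).take (k + 1) ∈ lang X := lang_take hr (k + 1)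
      simpa [List.take_succ_cons] using this

lemma TkProj_inl (a : A) (k : ℕ) : TkProj X k (Sum.inl a) = Sum.inl a := rfl

lemma TkProj_inr (w : Wt X (k + 1)) :
    TkProj X k (Sum.inr w) = Sum.inr ⟨w.1.take k, lang_take w.2.1 k, by
      simp [List.length_take, w.2.2]⟩ := rfl

lemma Tk_adj_inl_inr {k : ℕ} {a : A} {w : Wt X k} :
    (Tk X k).Adj (Sum.inl a) (Sum.inr w) ↔ a :: w.1 ∈ lang X := bipRel_adj_inl_inr

lemma Tk_adj_inr_inl {k : ℕ} {a : A} {w : Wt X k} :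
    (Tk X k).Adj (Sum.inr w) (Sum.inl a) ↔ a :: w.1 ∈ lang X := bipRel_adj_inr_inl

lemma TkProj_eq_inl {p : A ⊕ Wt X (k + 1)} {a : A} (h : TkProj X k p = Sum.inl a) :
    p = Sum.inl a := by
  match p with
  | Sum.inl x =>
    rw [TkProj_inl] at h
    have : x = a := by simpa using h
    rw [this]
  | Sum.inr w => rw [TkProj_inr] at h; exact absurd h (by simp)

/-- Key structural lemma: a path in `Tk X (k+1)` between two left extensions of a word `W`
of length `k` yields a chain of common extensions of `W`. -/
lemma fiber_chain (hac : (Tk X k).IsAcyclic) {W : List A} (hW : W ∈ lang X)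
    (hWl : W.length = k) :
    ∀ (N : ℕ) {a a' : A} (P : (Tk X (k + 1)).Walk (Sum.inl a) (Sum.inl a')),
      P.length ≤ N → P.IsPath → a :: W ∈ lang X → a' :: W ∈ lang X →
      Relation.ReflTransGen
        (fun x x' => ∃ b, x :: (W ++ [b]) ∈ lang X ∧ x' :: (W ++ [b]) ∈ lang X) a a' := by
  intro N
  induction N with
  | zero =>
    intro a a' P hlen hpath haW ha'W
    cases P with
    | nil => exact Relation.ReflTransGen.refl
    | cons h Q => simp at hlen
  | succ N ih =>
    intro a a' P hlen hpath haW ha'W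
    rcases eq_or_ne a a' with rfl | hne
    · exact Relation.ReflTransGen.refl
    cases P with
    | nil => exact Relation.ReflTransGen.refl
    | @cons _ y _ h Q =>
      match y, h with
      | Sum.inl z, h => exact absurd h bipRel_not_adj_inl_inl
      | Sum.inr V, h =>
        cases Q with
        | @cons _ y2 _ h' R =>
          match y2, h' with
          | Sum.inr z, h' => exact absurd h' bipRel_not_adj_inr_inr
          | Sum.inl a₁, h' =>
            -- the first step must stay in the fiber over W
            have hfib : V.1.take k = W := by
              by_contra hne2
              have hadjW : (Tk X k).Adj (Sum.inl a) (Sum.inr ⟨W, hW, hWl⟩) :=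
                bipRel_adj_inl_inr.mpr haW
              have hbr := isAcyclic_iff_forall_adj_isBridge.mp hac hadjW
              rw [isBridge_iff_adj_and_forall_walk_mem_edges] at hbr
              have hadjW' : (Tk X k).Adj (Sum.inl a') (Sum.inr ⟨W, hW, hWl⟩) :=
                bipRel_adj_inl_inr.mpr ha'W
              have hmem := hbr ((((Walk.cons h (Walk.cons h' R)).map
                  (TkProj X k)).copy (TkProj_inl a k) (TkProj_inl a' k)).append
                (Walk.cons hadjW' Walk.nil))
              rw [Walk.edges_append] at hmem
              simp only [Walk.edges_copy, Walk.edges_cons, Walk.edges_nil, List.mem_append,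
                List.mem_cons, List.not_mem_nil, or_false] at hmem
              rcases hmem with hmem | hmem
              · -- an edge of the projected path equals s(inl a, inr W)
                rw [Walk.edges_map] at hmem
                obtain ⟨e₀, he₀, hmape⟩ := List.mem_map.mp hmem
                revert he₀ hmape
                induction e₀ using Sym2.inductionOn with
                | hf p q =>
                intro he₀ hmape
                rw [Sym2.map_pair_eq, Sym2.eq_iff] at hmape
                have hpq : p = Sum.inl a ∨ q = Sum.inl a := by
                  rcases hmape with ⟨h1, -⟩ | ⟨-, h2⟩
                  · exact Or.inl (TkProj_eq_inl h1)
                  · exact Or.inr (TkProj_eq_inl h2)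
                -- edges of the path containing the initial vertex: must be the first edge
                rw [show (Walk.cons h (Walk.cons h' R)).edges
                    = s(Sum.inl a, Sum.inr V) :: (Walk.cons h' R).edges from rfl] at he₀
                rcases List.mem_cons.mp he₀ with hfirst | hrest
                · -- then the projection of the first edge is s(inl a, inr W), so take = W
                  have hVW : TkProj X k (Sum.inr V) = Sum.inr (⟨W, hW, hWl⟩ : Wt X k) := by
                    rcases Sym2.eq_iff.mp hfirst with ⟨hp, hq⟩ | ⟨hp, hq⟩
                    · rcases hmape with ⟨h1, h2⟩ | ⟨h1, h2⟩
                      · rw [← hq]; exact h2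
                      · rw [hq] at h2; rw [TkProj_inr] at h2; exact absurd h2 (by simp)
                    · rcases hmape with ⟨h1, h2⟩ | ⟨h1, h2⟩
                      · rw [hp] at h1; rw [TkProj_inr] at h1; exact absurd h1 (by simp)
                      · rw [hp] at h1; exact h1
                  rw [TkProj_inr] at hVW
                  have := (Sum.inr.injEq _ _).mp hVW
                  exact hne2 (congrArg Subtype.val this)
                · -- impossible: inl a would be an interior vertex of the path
                  have hnotin : Sum.inl a ∉ (Walk.cons h' R).support :=
                    ((Walk.cons_isPath_iff h (Walk.cons h' R)).mp hpath).2
                  rcases hpq with rfl | rfl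
                  · exact hnotin ((Walk.cons h' R).fst_mem_support_of_mem_edges hrest)
                  · exact hnotin ((Walk.cons h' R).snd_mem_support_of_mem_edges hrest)
              · -- the final appended edge
                rcases Sym2.eq_iff.mp hmem with ⟨h1, -⟩ | ⟨h1, -⟩
                · exact hne ((Sum.inl.injEq _ _).mp h1)
                · exact absurd h1 (by simp)
            -- decompose V = W ++ [b]
            obtain ⟨b, hb⟩ : ∃ b, V.1.drop k = [b] :=
              List.length_eq_one_iff.mp (by rw [List.length_drop, V.2.2]; omega)
            have hVeq : V.1 = W ++ [b] := by
              conv_lhs => rw [← List.take_append_drop k V.1]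
              rw [hfib, hb]
            have haV : a :: (W ++ [b]) ∈ lang X := by
              rw [← hVeq]; exact Tk_adj_inl_inr.mp h
            have ha₁V : a₁ :: (W ++ [b]) ∈ lang X := by
              rw [← hVeq]; exact Tk_adj_inr_inl.mp h'
            have ha₁W : a₁ :: W ∈ lang X := by
              have := lang_take ha₁V (k + 1)
              rw [List.take_succ_cons] at this
              have htw : (W ++ [b]).take k = W := by
                rw [← hWl]; exact List.take_left
              rwa [htw] at this
            have hRpath : R.IsPath :=
              (((Walk.cons_isPath_iff _ _).mp ((Walk.cons_isPath_iff _ _).mp hpath).1)).1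
            have hRlen : R.length ≤ N := by
              have : (Walk.cons h (Walk.cons h' R)).length = R.length + 2 := by simp
              omega
            exact Relation.ReflTransGen.head ⟨b, haV, ha₁V⟩
              (ih R hRlen hRpath ha₁W ha'W)

end TkGraphs

section MainLemmas

variable {A : Type*} {X : Set (ℤ → A)}

lemma extGraph_eq_bipRel (L : Set (List A)) (v : List A) :
    extGraph L v = bipRel (fun (a : {a : A // a :: v ∈ L}) (b : {b : A // v ++ [b] ∈ L}) =>
      (a.1 :: (v ++ [b.1])) ∈ L) := by
  unfold extGraph bipRel
  congr 1
  funext p q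
  match p, q with
  | Sum.inl a, Sum.inr b => rfl
  | Sum.inl a, Sum.inl a' => rfl
  | Sum.inr b, Sum.inl a => rfl
  | Sum.inr b, Sum.inr b' => rfl

lemma ext_adj_inl_inr {L : Set (List A)} {v : List A} {a : {a : A // a :: v ∈ L}}
    {b : {b : A // v ++ [b] ∈ L}} :
    (extGraph L v).Adj (Sum.inl a) (Sum.inr b) ↔ a.1 :: (v ++ [b.1]) ∈ L := by
  rw [extGraph_eq_bipRel]; exact bipRel_adj_inl_inr

lemma ext_adj_inr_inl {L : Set (List A)} {v : List A} {a : {a : A // a :: v ∈ L}}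
    {b : {b : A // v ++ [b] ∈ L}} :
    (extGraph L v).Adj (Sum.inr b) (Sum.inl a) ↔ a.1 :: (v ++ [b.1]) ∈ L := by
  rw [extGraph_eq_bipRel]; exact bipRel_adj_inr_inl

lemma cons_ext_mem {W : List A} {a b : A} (h : a :: (W ++ [b]) ∈ lang X) :
    a :: W ∈ lang X := by
  have := lang_take h (W.length + 1)
  rw [List.take_succ_cons, ← List.take_left (l₁ := W) (l₂ := [b])] at this
  simpa using this

/-- The graph `Tk X k` is acyclic when `G^L_k` is acyclic for the coloring. -/
lemma Tk_acyclic {k : ℕ} (h : AcyclicForColoring (GLmem X k)) : (Tk X k).IsAcyclic := by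
  apply bipRel_acyclic
  intro m va wb hva hwb hadj
  have hcyc : IsCycleM (GLmem X k) m va (fun i => (wb i).1) := by
    refine ⟨hva, fun i => ⟨fun he => fin_succ_ne_self i (hva he).symm,
      ⟨(wb i).2.2, (wb i).2.1, (hadj i).1⟩, ⟨(wb i).2.2, (wb i).2.1, (hadj i).2⟩⟩,
      fun i j hij hcon => hij (hwb (Subtype.ext hcon.1))⟩
  have h01 := h m va _ hcyc 0 1
  have : (0 : Fin (m + 2)) = 1 := hwb (Subtype.ext h01)
  simpa using this

/-- The graph `Tk X k` is connected (on left vertices) when `G^L_k` is connected. -/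
lemma Tk_reach_inl {k : ℕ} (hconn : MConnected (GLmem X k)) (a a' : A) :
    (Tk X k).Reachable (Sum.inl a) (Sum.inl a') := by
  have h := hconn a a'
  induction h with
  | refl => exact SimpleGraph.Reachable.refl _
  | tail h1 st ih =>
    obtain ⟨ℓ, hne, h1m, h2m⟩ := st
    refine ih.trans ?_
    have had1 : (Tk X k).Adj (Sum.inl _) (Sum.inr ⟨ℓ, h1m.2.1, h1m.1⟩) :=
      Tk_adj_inl_inr.mpr h1m.2.2
    have had2 : (Tk X k).Adj (Sum.inr ⟨ℓ, h1m.2.1, h1m.1⟩) (Sum.inl _) :=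
      Tk_adj_inr_inl.mpr h2m.2.2
    exact had1.reachable.trans had2.reachable

lemma rtg_to_ext {W : List A} {a : A} :
    ∀ {x : A}, Relation.ReflTransGen
      (fun x x' => ∃ b, x :: (W ++ [b]) ∈ lang X ∧ x' :: (W ++ [b]) ∈ lang X) a x →
    ∀ (ha : a :: W ∈ lang X) (hx : x :: W ∈ lang X),
      (extGraph (lang X) W).Reachable (Sum.inl ⟨a, ha⟩) (Sum.inl ⟨x, hx⟩) := by
  intro x h
  induction h with
  | refl => intro ha hx; exact SimpleGraph.Reachable.refl _
  | tail h1 st ih =>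
    intro ha hx
    obtain ⟨b, hyb, hxb⟩ := st
    have hy : _ :: W ∈ lang X := cons_ext_mem hyb
    refine (ih ha hy).trans ?_
    have hbmem : W ++ [b] ∈ lang X := lang_of_cons hyb
    have had1 : (extGraph (lang X) W).Adj (Sum.inl ⟨_, hy⟩) (Sum.inr ⟨b, hbmem⟩) :=
      ext_adj_inl_inr.mpr hyb
    have had2 : (extGraph (lang X) W).Adj (Sum.inr ⟨b, hbmem⟩) (Sum.inl ⟨_, hx⟩) :=
      ext_adj_inr_inl.mpr hxb
    exact had1.reachable.trans had2.reachable

/-- Connectivity of extension graphs from the right-hand side conditions. -/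
lemma ext_connected (hRHS : ∀ n, AcyclicForColoring (GLmem X n) ∧ MConnected (GLmem X n))
    {W : List A} (hW : W ∈ lang X) : (extGraph (lang X) W).Connected := by
  classical
  have hinl : ∀ (a a' : A) (ha : a :: W ∈ lang X) (ha' : a' :: W ∈ lang X),
      (extGraph (lang X) W).Reachable (Sum.inl ⟨a, ha⟩) (Sum.inl ⟨a', ha'⟩) := by
    intro a a' ha ha'
    have hreach := Tk_reach_inl (k := W.length + 1) (hRHS (W.length + 1)).2 a a'
    obtain ⟨p⟩ := hreach
    have hrtg := fiber_chain (Tk_acyclic (hRHS W.length).1) hW rfl p.bypass.length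
      p.bypass le_rfl p.bypass_isPath ha ha'
    exact rtg_to_ext hrtg ha ha'
  have toInl : ∀ p : ({a : A // a :: W ∈ lang X} ⊕ {b : A // W ++ [b] ∈ lang X}),
      ∃ (a : A) (ha : a :: W ∈ lang X),
        (extGraph (lang X) W).Reachable p (Sum.inl ⟨a, ha⟩) := by
    rintro (⟨a, ha⟩ | ⟨b, hb⟩)
    · exact ⟨a, ha, SimpleGraph.Reachable.refl _⟩
    · obtain ⟨a, hab⟩ := exists_cons_lang hb
      have ha : a :: W ∈ lang X := cons_ext_mem hab
      exact ⟨a, ha, (ext_adj_inr_inl.mpr hab).reachable⟩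
  obtain ⟨a0, ha0⟩ := exists_cons_lang hW
  haveI : Nonempty ({a : A // a :: W ∈ lang X} ⊕ {b : A // W ++ [b] ∈ lang X}) :=
    ⟨Sum.inl ⟨a0, ha0⟩⟩
  refine SimpleGraph.Connected.mk ?_
  intro p q
  obtain ⟨a, ha, hp⟩ := toInl p
  obtain ⟨a', ha', hq⟩ := toInl q
  exact (hp.trans (hinl a a' ha ha')).trans hq.symm

/-- The embedding of the extension graph of `W` into `Tk X (W.length + 1)`. -/
def extToTk (X : Set (ℤ → A)) (W : List A) : extGraph (lang X) W →g Tk X (W.length + 1) where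
  toFun := Sum.map (fun a => a.1) (fun b => ⟨W ++ [b.1], b.2, by simp⟩)
  map_rel' := by
    intro p q h
    rw [extGraph_eq_bipRel] at h
    rcases bipRel_adj_cases h with ⟨a, b, rfl, rfl, hr⟩ | ⟨a, b, rfl, rfl, hr⟩
    · exact Tk_adj_inl_inr.mpr hr
    · exact Tk_adj_inr_inl.mpr hr

lemma extToTk_inj (W : List A) : Function.Injective (extToTk X W) := by
  rintro (a | b) (a' | b') h
  · have h' : (Sum.inl a.1 : A ⊕ Wt X (W.length + 1)) = Sum.inl a'.1 := h
    have := (Sum.inl.injEq _ _).mp h'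
    rw [Subtype.ext this]
  · have h' : (Sum.inl a.1 : A ⊕ Wt X (W.length + 1)) = Sum.inr _ := h
    simp at h'
  · have h' : (Sum.inr _ : A ⊕ Wt X (W.length + 1)) = Sum.inl a'.1 := h
    simp at h'
  · have h' : (Sum.inr (⟨W ++ [b.1], b.2, by simp⟩ : Wt X (W.length + 1))
        : A ⊕ Wt X (W.length + 1)) = Sum.inr ⟨W ++ [b'.1], b'.2, by simp⟩ := h
    have h2 := (Sum.inr.injEq _ _).mp h'
    have h3 : W ++ [b.1] = W ++ [b'.1] := congrArg Subtype.val h2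
    have h4 : b.1 = b'.1 := by simpa using List.append_cancel_left h3
    rw [Subtype.ext h4]

lemma ext_acyclic {W : List A} (hac : AcyclicForColoring (GLmem X (W.length + 1))) :
    (extGraph (lang X) W).IsAcyclic := by
  intro z c hc
  exact Tk_acyclic hac (c.map (extToTk X W)) (hc.map (extToTk_inj W))

/-- Forward direction: connectivity of the graphs `G^L_n`. -/
lemma forward_conn (hne : X.Nonempty) (hover : ∀ a : A, [a] ∈ lang X)
    (htree : ∀ v ∈ lang X, (extGraph (lang X) v).IsTree) :
    ∀ n, MConnected (GLmem X n) := by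
  intro n
  induction n with
  | zero =>
    intro x y
    rcases eq_or_ne x y with rfl | hxy
    · exact Relation.ReflTransGen.refl
    · exact Relation.ReflTransGen.single
        ⟨[], hxy, ⟨rfl, lang_nil hne, hover x⟩, ⟨rfl, lang_nil hne, hover y⟩⟩
  | succ n ihn =>
    -- each single edge at level n lifts to a chain at level n + 1
    have upgrade : ∀ {x y : A} {w : List A}, MEdge (GLmem X n) w x y →
        Relation.ReflTransGen (fun p q => ∃ ℓ, MEdge (GLmem X (n + 1)) ℓ p q) x y := by
      rintro x y w ⟨hxy, hx, hy⟩
      obtain ⟨hwlen, hwmem, hxw⟩ := hx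
      have hyw := hy.2.2
      have hreach : (extGraph (lang X) w).Reachable (Sum.inl ⟨x, hxw⟩) (Sum.inl ⟨y, hyw⟩) :=
        (htree w hwmem).1.preconnected _ _
      rw [extGraph_eq_bipRel] at hreach
      have hchain := bipRel_reach hreach
      -- push the chain down to `A`
      clear hreach hxy
      generalize hq : (⟨y, hyw⟩ : {a : A // a :: w ∈ lang X}) = q at hchain
      have : ∀ (q : {a : A // a :: w ∈ lang X}), Relation.ReflTransGen
          (fun (p p' : {a : A // a :: w ∈ lang X}) => ∃ b : {b : A // w ++ [b] ∈ lang X},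
            p.1 :: (w ++ [b.1]) ∈ lang X ∧ p'.1 :: (w ++ [b.1]) ∈ lang X)
          (⟨x, hxw⟩ : {a : A // a :: w ∈ lang X}) q →
          Relation.ReflTransGen (fun p q => ∃ ℓ, MEdge (GLmem X (n + 1)) ℓ p q) x q.1 := by
        intro q hch
        induction hch with
        | refl => exact Relation.ReflTransGen.refl
        | tail h1 st ih =>
          obtain ⟨b, hpb, hqb⟩ := st
          rename_i p' q'
          rcases eq_or_ne p'.1 q'.1 with heq | hne'
          · rw [← heq]; exact ih
          · refine ih.tail ⟨w ++ [b.1], hne', ⟨by simp [hwlen], b.2, hpb⟩,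
              ⟨by simp [hwlen], b.2, hqb⟩⟩
      have := this q hchain
      rw [← hq] at this
      exact this
    intro x y
    have h := ihn x y
    induction h with
    | refl => exact Relation.ReflTransGen.refl
    | tail h1 st ih =>
      obtain ⟨ℓ, hst⟩ := st
      exact ih.trans (upgrade hst)

/-- Forward direction: acyclicity for the coloring of the graphs `G^L_n`. -/
lemma forward_acyc (htree : ∀ v ∈ lang X, (extGraph (lang X) v).IsTree) :
    ∀ n, AcyclicForColoring (GLmem X n) := by
  intro n
  induction n with
  | zero =>
    intro m v ℓ hcyc i j
    have hi : (ℓ i).length = 0 := (hcyc.2.1 i).2.1.1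
    have hj : (ℓ j).length = 0 := (hcyc.2.1 j).2.1.1
    rw [List.length_eq_zero_iff.mp hi, List.length_eq_zero_iff.mp hj]
  | succ n ihn =>
    intro m v ℓ hcyc
    obtain ⟨hvinj, hmedge, hdist⟩ := hcyc
    have hlen : ∀ i, (ℓ i).length = n + 1 := fun i => (hmedge i).2.1.1
    have hmem : ∀ i, ℓ i ∈ lang X := fun i => (hmedge i).2.1.2.1
    have hcons1 : ∀ i, v i :: ℓ i ∈ lang X := fun i => (hmedge i).2.1.2.2
    have hcons2 : ∀ i, v (i + 1) :: ℓ i ∈ lang X := fun i => (hmedge i).2.2.2.2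
    set u : Fin (m + 2) → List A := fun i => (ℓ i).take n with hu
    have hglm : ∀ i, GLmem X n (u i) (v i) := by
      intro i
      refine ⟨by simp [hu, hlen i], lang_take (hmem i) n, ?_⟩
      have := lang_take (hcons1 i) (n + 1)
      rwa [List.take_succ_cons] at this
    have hglm2 : ∀ i, GLmem X n (u i) (v (i + 1)) := by
      intro i
      refine ⟨by simp [hu, hlen i], lang_take (hmem i) n, ?_⟩
      have := lang_take (hcons2 i) (n + 1)
      rwa [List.take_succ_cons] at this
    -- all the projected labels agree
    have huall : ∀ i j, u i = u j := by
      rcases Nat.eq_zero_or_pos m with rfl | hm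
      · -- cycles of length 2
        have h01 : u 0 = u 1 := by
          by_contra hu01
          have hc' : IsCycleM (GLmem X n) 0 v u := by
            refine ⟨hvinj, fun i => ⟨(hmedge i).1, hglm i, hglm2 i⟩, ?_⟩
            intro i j hij hcon
            apply hu01
            fin_cases i <;> fin_cases j <;>
              first
                | exact absurd rfl hij
                | exact hcon.1
                | exact hcon.1.symm
          exact hu01 (ihn 0 v u hc' 0 1)
        intro i j
        fin_cases i <;> fin_cases j <;>
          first
            | rfl
            | exact h01
            | exact h01.symm
      · have hc' : IsCycleM (GLmem X n) m v u := by
          refine ⟨hvinj, fun i => ⟨(hmedge i).1, hglm i, hglm2 i⟩, ?_⟩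
          intro i j hij hcon
          exact pair_ne_of_inj hm hvinj i j hij hcon.2
        exact ihn m v u hc'
    -- decompose each label as `u 0 ++ [b]`
    have hdecomp : ∀ i, ∃ b, ℓ i = u 0 ++ [b] := by
      intro i
      obtain ⟨b, hb⟩ : ∃ b, (ℓ i).drop n = [b] :=
        List.length_eq_one_iff.mp (by rw [List.length_drop, hlen i]; omega)
      refine ⟨b, ?_⟩
      conv_lhs => rw [← List.take_append_drop n (ℓ i)]
      rw [hb]
      have h0 : List.take n (ℓ i) = u 0 := huall i 0
      rw [h0]
    choose bs hbs using hdecomp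
    -- the extension graph of `u 0` is a tree; apply the chain lemma
    have htr := htree (u 0) (lang_take (hmem 0) n)
    have hbsmem : ∀ i, u 0 ++ [bs i] ∈ lang X := by
      intro i; rw [← hbs i]; exact hmem i
    have hvmem : ∀ i, v i :: u 0 ∈ lang X := by
      intro i
      have := (hglm i).2.2
      rwa [huall i 0] at this
    set avert : Fin (m + 2) → ({a : A // a :: u 0 ∈ lang X} ⊕ {b : A // u 0 ++ [b] ∈ lang X}) :=
      fun i => Sum.inl ⟨v i, hvmem i⟩ with hav
    set bvert : Fin (m + 2) → ({a : A // a :: u 0 ∈ lang X} ⊕ {b : A // u 0 ++ [b] ∈ lang X}) :=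
      fun i => Sum.inr ⟨bs i, hbsmem i⟩ with hbv
    have hchain : ∀ i, bvert i = bvert (i + 1) := by
      refine chain_eq_of_acyclic (a := avert) (b := bvert) htr.2 ?_ ?_ ?_ ?_
      · intro i j hij
        have hij' : (Sum.inl ⟨v i, hvmem i⟩ : {a : A // a :: u 0 ∈ lang X} ⊕
            {b : A // u 0 ++ [b] ∈ lang X}) = Sum.inl ⟨v j, hvmem j⟩ := hij
        have h2 := (Sum.inl.injEq _ _).mp hij'
        exact hvinj (congrArg Subtype.val h2)
      · intro i j
        simp [hav, hbv]
      · intro i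
        show (extGraph (lang X) (u 0)).Adj (Sum.inl ⟨v i, hvmem i⟩) (Sum.inr ⟨bs i, hbsmem i⟩)
        apply ext_adj_inl_inr.mpr
        show v i :: (u 0 ++ [bs i]) ∈ lang X
        rw [← hbs i]
        exact hcons1 i
      · intro i
        show (extGraph (lang X) (u 0)).Adj (Sum.inr ⟨bs i, hbsmem i⟩)
          (Sum.inl ⟨v (i + 1), hvmem (i + 1)⟩)
        apply ext_adj_inr_inl.mpr
        show v (i + 1) :: (u 0 ++ [bs i]) ∈ lang X
        rw [← hbs i]
        exact hcons2 i
    have hbconst : ∀ i j, bvert i = bvert j := cyclic_const hchain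
    intro i j
    have hbij : bs i = bs j := by
      have := (Sum.inr.injEq _ _).mp (hbconst i j)
      exact congrArg Subtype.val this
    rw [hbs i, hbs j, hbij]

end MainLemmas

end DendricAux

/-- A shift space `X` is dendric (every extension graph is a tree) if and only if for
all `n ∈ ℕ` the graph `G^L_n(X)` is acyclic for the labeling and connected. -/
theorem stmt_14 {A : Type*} [Fintype A] [TopologicalSpace A] [DiscreteTopology A]
    (X : Set (ℤ → A)) (hX : IsShiftSpace X) (hover : ∀ a : A, [a] ∈ lang X) :
    (∀ v ∈ lang X, (extGraph (lang X) v).IsTree)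
      ↔ ∀ n : ℕ, AcyclicForColoring (GLmem X n) ∧ MConnected (GLmem X n) := by
  constructor
  · intro htree n
    exact ⟨DendricAux.forward_acyc htree n, DendricAux.forward_conn hX.1 hover htree n⟩
  · intro hRHS v hv
    exact ⟨DendricAux.ext_connected hRHS hv, DendricAux.ext_acyclic (hRHS (v.length + 1)).1⟩
end

section
/- Let σ : A* → A* be a return morphism and ≤ a total order on A. Then there exists a unique total order ⪯ on A such that σ is left order preserving from ⪯ to ≤, i.e., for every s ∈ T^L(σ), the partial map φ^L_{σ,s} is order preserving from ⪯ to ≤. -/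
/-- `s` is the longest common suffix of `u` and `v`. -/
def IsLongestCommonSuffix {B : Type*} (s u v : List B) : Prop :=
  s <:+ u ∧ s <:+ v ∧ ∀ t : List B, t <:+ u → t <:+ v → t.length ≤ s.length

/-- `s ∈ T^L(σ)`: `s` is the longest common suffix of `σ(a)` and `σ(b)` for some pair
of distinct letters `a ≠ b`. -/
def memTL {A B : Type*} (σ : A → List B) (s : List B) : Prop :=
  ∃ a b : A, a ≠ b ∧ IsLongestCommonSuffix s (σ a) (σ b)

/-- `σ` is left order preserving from `r` to `le`: for every `s ∈ T^L(σ)`, the partial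
map `φ^L_{σ,s}` (sending `x` with `σ(x) ∈ B* x' s` to `x'`) is order preserving from
the (strict version of the) order `r` to the order `le`. -/
def LeftOrderPreserving {A B : Type*} (σ : A → List B)
    (r : A → A → Prop) (le : B → B → Prop) : Prop :=
  ∀ s : List B, memTL σ s → ∀ x y : A, ∀ x' y' : B, r x y → x ≠ y →
    (∃ u : List B, σ x = u ++ x' :: s) → (∃ u : List B, σ y = u ++ y' :: s) → le x' y'

open Classical in
noncomputable def lcp {A : Type*} : List A → List A → List A
  | a :: l1, b :: l2 => if a = b then a :: lcp l1 l2 else []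
  | _, _ => []

theorem lcp_nil_left {A : Type*} (l : List A) : lcp [] l = [] := by cases l <;> rfl

theorem lcp_prefix_left {A : Type*} : ∀ l1 l2 : List A, lcp l1 l2 <+: l1
  | [], l2 => by simp [lcp_nil_left]
  | a :: l1, [] => by simp [lcp]
  | a :: l1, b :: l2 => by
    by_cases h : a = b
    · simp only [lcp, h, if_true, List.cons_prefix_cons]
      exact ⟨trivial, lcp_prefix_left l1 l2⟩
    · simp [lcp, h]

theorem lcp_prefix_right {A : Type*} : ∀ l1 l2 : List A, lcp l1 l2 <+: l2
  | [], l2 => by simp [lcp_nil_left]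
  | a :: l1, [] => by simp [lcp]
  | a :: l1, b :: l2 => by
    by_cases h : a = b
    · subst h
      simp only [lcp, if_true, List.cons_prefix_cons]
      exact ⟨trivial, lcp_prefix_right l1 l2⟩
    · simp [lcp, h]

theorem prefix_lcp {A : Type*} : ∀ l1 l2 t : List A, t <+: l1 → t <+: l2 → t <+: lcp l1 l2
  | _, _, [], _, _ => by simp
  | [], l2, c :: t, h1, _ => by simp at h1
  | a :: l1, [], c :: t, _, h2 => by simp at h2
  | a :: l1, b :: l2, c :: t, h1, h2 => by
    rw [List.cons_prefix_cons] at h1 h2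
    obtain ⟨rfl, h1⟩ := h1
    obtain ⟨rfl, h2⟩ := h2
    simp only [lcp, if_true, List.cons_prefix_cons]
    exact ⟨trivial, prefix_lcp l1 l2 t h1 h2⟩

theorem sc_not_suffix {A : Type*} (sa sb w : List A)
    (hsa : sa ≠ []) (hwa : w <+: sa ++ w)
    (hwb : w <+: sb ++ w) (hcb : occCount w (sb ++ w) = 2)
    (hne : sa ≠ sb) : ¬ sa <:+ sb := by
  rintro ⟨p, hp⟩
  have hpne : p ≠ [] := by rintro rfl; simp at hp; exact hne hp
  set S : Set ℕ := {i : ℕ | i ≤ (sb ++ w).length ∧ w <+: (sb ++ w).drop i} with hS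
  have hfin : S.Finite := (Set.finite_Iic (sb ++ w).length).subset (fun i hi => hi.1)
  have h0 : (0 : ℕ) ∈ S := ⟨Nat.zero_le _, by simpa using hwb⟩
  have hb : sb.length ∈ S := ⟨by simp, by simp [List.drop_left]⟩
  have hpS : p.length ∈ S := by
    constructor
    · subst hp
      simp only [List.length_append]
      omega
    · have : (sb ++ w).drop p.length = sa ++ w := by
        subst hp; rw [List.append_assoc, List.drop_left]
      rw [this]; exact hwa
  have h1 : 0 < p.length := List.length_pos_iff.2 hpne
  have h2 : p.length < sb.length := by
    subst hp; simp [List.length_append]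
    exact List.length_pos_iff.2 hsa
  have hsub : ({0, p.length, sb.length} : Set ℕ) ⊆ S := by
    rintro i (rfl | rfl | rfl) <;> assumption
  have hcard3 : ({0, p.length, sb.length} : Set ℕ).ncard = 3 := by
    rw [Set.ncard_eq_three]
    exact ⟨0, p.length, sb.length, by omega, by omega, by omega, rfl⟩
  have := Set.ncard_le_ncard hsub hfin
  rw [hcard3] at this
  rw [occCount, ← hS] at hcb
  omega

theorem lex_append_left_iff {A : Type*} (lt : A → A → Prop) [IsIrrefl A lt] :
    ∀ (p l1 l2 : List A), List.Lex lt (p ++ l1) (p ++ l2) ↔ List.Lex lt l1 l2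
  | [], l1, l2 => Iff.rfl
  | c :: p, l1, l2 => by
    rw [List.cons_append, List.cons_append, List.lex_cons_iff]
    exact lex_append_left_iff lt p l1 l2

/-- For every return morphism `σ : A* → A*` and every total order `≤` on `A`, there is a
unique total order `⪯` on `A` such that `σ` is left order preserving from `⪯` to `≤`. -/
theorem stmt_15 {A : Type*} (σ : A → List A) (w : List A)
    (hret : IsReturnMorphism σ w)
    (le : A → A → Prop) (hle : IsLinearOrder A le) :
    ∃! r : A → A → Prop, IsLinearOrder A r ∧ LeftOrderPreserving σ r le := by
  obtain ⟨hw, hinj, hcond⟩ := hret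
  -- letter injectivity
  have hlinj : ∀ a b : A, σ a = σ b → a = b := by
    intro a b h
    have := @hinj [a] [b] (by simpa using h)
    simpa using this
  -- strict order on A from le
  set lt : A → A → Prop := fun x y => le x y ∧ ¬ le y x with hlt
  haveI : IsIrrefl A lt := ⟨fun a h => h.2 h.1⟩
  haveI : IsTrans A lt := ⟨fun a b c h1 h2 =>
    ⟨hle.trans _ _ _ h1.1 h2.1, fun h => h1.2 (hle.trans _ _ _ h2.1 h)⟩⟩
  haveI : IsAsymm A lt := ⟨fun a b h1 h2 => h1.2 h2.1⟩
  haveI : IsTrichotomous A lt := ⟨by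
    intro a b h1 h2
    by_contra hab
    rcases hle.total a b with h | h
    · exact h1 ⟨h, fun h' => hab (hle.antisymm _ _ h h')⟩
    · exact h2 ⟨h, fun h' => hab (hle.antisymm _ _ h' h)⟩⟩
  haveI : IsStrictTotalOrder A lt := {}
  have hlexTrans : ∀ l1 l2 l3 : List A,
      List.Lex lt l1 l2 → List.Lex lt l2 l3 → List.Lex lt l1 l3 := fun l1 l2 l3 =>
    by haveI := isStrictWeakOrder_of_isOrderConnected (α := List A) (r := List.Lex lt); exact IsTrans.trans (r := List.Lex lt) l1 l2 l3
  have hlexAsymm : ∀ l1 l2 : List A, List.Lex lt l1 l2 → ¬ List.Lex lt l2 l1 :=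
    fun l1 l2 => Std.Asymm.asymm l1 l2
  -- the canonical decomposition for distinct letters
  have hdec : ∀ a b : A, a ≠ b → ∃ s x' y' u v, σ a = u ++ x' :: s ∧ σ b = v ++ y' :: s ∧
      x' ≠ y' ∧ IsLongestCommonSuffix s (σ a) (σ b) := by
    intro a b hab
    set Ra := (σ a).reverse with hRa
    set Rb := (σ b).reverse with hRb
    set p := lcp Ra Rb with hp
    have hpa : p <+: Ra := lcp_prefix_left _ _
    have hpb : p <+: Rb := lcp_prefix_right _ _
    have hsane : σ a ≠ σ b := fun h => hab (hlinj a b h)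
    -- p ≠ Ra
    have hna : p ≠ Ra := by
      intro heq
      have hpb' : Ra <+: Rb := heq ▸ hpb
      have : σ a <:+ σ b := List.reverse_prefix.mp hpb'
      exact sc_not_suffix (σ a) (σ b) w (hcond a).1 (hcond a).2.1 (hcond b).2.1
        (hcond b).2.2 hsane this
    have hnb : p ≠ Rb := by
      intro heq
      have hpa' : Rb <+: Ra := heq ▸ hpa
      have : σ b <:+ σ a := List.reverse_prefix.mp hpa'
      exact sc_not_suffix (σ b) (σ a) w (hcond b).1 (hcond b).2.1 (hcond a).2.1
        (hcond a).2.2 (Ne.symm hsane) this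
    obtain ⟨ta, hta⟩ := hpa
    obtain ⟨tb, htb⟩ := hpb
    rcases ta with _ | ⟨x', ua⟩
    · exact absurd (by simpa using hta) hna
    rcases tb with _ | ⟨y', ub⟩
    · exact absurd (by simpa using htb) hnb
    have hxy : x' ≠ y' := by
      rintro rfl
      have hpre : p ++ [x'] <+: lcp Ra Rb :=
        prefix_lcp Ra Rb (p ++ [x'])
          ⟨ua, by rw [← hta]; simp⟩ ⟨ub, by rw [← htb]; simp⟩
      have := hpre.length_le
      simp [← hp] at this
    refine ⟨p.reverse, x', y', ua.reverse, ub.reverse, ?_, ?_, hxy, ?_, ?_, ?_⟩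
    · have : σ a = Ra.reverse := by simp [hRa]
      rw [this, ← hta]; simp
    · have : σ b = Rb.reverse := by simp [hRb]
      rw [this, ← htb]; simp
    · refine ⟨(x' :: ua).reverse, ?_⟩
      have : σ a = Ra.reverse := by simp [hRa]
      rw [this, ← hta]; simp
    · refine ⟨(y' :: ub).reverse, ?_⟩
      have : σ b = Rb.reverse := by simp [hRb]
      rw [this, ← htb]; simp
    · intro t h1 h2
      have h1' : t.reverse <+: Ra := by rw [hRa, List.reverse_prefix]; simpa using h1
      have h2' : t.reverse <+: Rb := by rw [hRb, List.reverse_prefix]; simpa using h2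
      have := (prefix_lcp Ra Rb t.reverse h1' h2').length_le
      simpa using this
  -- the order
  set r : A → A → Prop :=
    fun a b => a = b ∨ List.Lex lt (σ a).reverse (σ b).reverse with hr
  -- key equivalence: for decompositions with distinct marked letters
  have hkey : ∀ (x y : A) (s : List A) (x' y' : A) (u v : List A),
      σ x = u ++ x' :: s → σ y = v ++ y' :: s → x' ≠ y' →
      (List.Lex lt (σ x).reverse (σ y).reverse ↔ lt x' y') := by
    intro x y s x' y' u v hx hy hxy
    rw [hx, hy]
    have ex : (u ++ x' :: s).reverse = s.reverse ++ x' :: u.reverse := by simp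
    have ey : (v ++ y' :: s).reverse = s.reverse ++ y' :: v.reverse := by simp
    rw [ex, ey, lex_append_left_iff]
    constructor
    · intro h
      cases h with
      | cons h => exact absurd rfl hxy
      | rel h => exact h
    · exact List.Lex.rel
  have hrtotal : ∀ a b : A, r a b ∨ r b a := by
    intro a b
    by_cases hab : a = b
    · exact Or.inl (Or.inl hab)
    rcases trichotomous_of (List.Lex lt) (σ a).reverse (σ b).reverse with h | h | h
    · exact Or.inl (Or.inr h)
    · exact absurd (hlinj a b (by simpa using congrArg List.reverse h)) hab
    · exact Or.inr (Or.inr h)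
  have hrtrans : ∀ a b c : A, r a b → r b c → r a c := by
    rintro a b c (rfl | h1) h2
    · exact h2
    rcases h2 with rfl | h2
    · exact Or.inr h1
    · exact Or.inr (hlexTrans _ _ _ h1 h2)
  have hranti : ∀ a b : A, r a b → r b a → a = b := by
    rintro a b (rfl | h1) h2
    · rfl
    rcases h2 with rfl | h2
    · rfl
    · exact absurd h2 (hlexAsymm _ _ h1)
  have hrlin : IsLinearOrder A r :=
    { refl := fun a => Or.inl rfl
      trans := hrtrans
      antisymm := hranti
      total := hrtotal }
  have hrLOP : LeftOrderPreserving σ r le := by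
    rintro s hs x y x' y' hxy hne ⟨u, hu⟩ ⟨v, hv⟩
    rcases hxy with rfl | hlex
    · exact absurd rfl hne
    by_cases hxy' : x' = y'
    · exact hxy' ▸ hle.refl x'
    · exact ((hkey x y s x' y' u v hu hv hxy').1 hlex).1
  refine ⟨r, ⟨hrlin, hrLOP⟩, ?_⟩
  rintro r' ⟨hlin', hLOP'⟩
  funext a b
  apply propext
  by_cases hab : a = b
  · subst hab
    exact ⟨fun _ => Or.inl rfl, fun _ => hlin'.refl a⟩
  obtain ⟨s, x', y', u, v, hx, hy, hxy, hlcs⟩ := hdec a b hab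
  have hmem : memTL σ s := ⟨a, b, hab, hlcs⟩
  have fwd : r' a b → r a b := by
    intro h
    have hle' : le x' y' := hLOP' s hmem a b x' y' h hab ⟨u, hx⟩ ⟨v, hy⟩
    have : lt x' y' := ⟨hle', fun h' => hxy (hle.antisymm _ _ hle' h')⟩
    exact Or.inr ((hkey a b s x' y' u v hx hy hxy).2 this)
  have bwd : r' b a → r b a := by
    intro h
    have hle' : le y' x' := hLOP' s hmem b a y' x' h (Ne.symm hab) ⟨v, hy⟩ ⟨u, hx⟩
    have : lt y' x' := ⟨hle', fun h' => hxy (hle.antisymm _ _ h' hle')⟩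
    exact Or.inr ((hkey b a s y' x' v u hy hx (Ne.symm hxy)).2 this)
  constructor
  · exact fwd
  · intro h
    by_contra hcon
    rcases hlin'.total a b with h' | h'
    · exact hcon h'
    · have := hrlin.antisymm _ _ h (bwd h')
      exact hab this
end
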